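/- arXiv:1203.4965 — 15 statements merged into one kernel-verified Lean document; each statement's English description precedes it below -/
import Mathlib

section
/- Gluing identity for trace invariants: let (V₁, W₁, σ) and (V₂, W₂, τ) be closed D-colored graphs, v₁ : V₁ a white vertex and w₂ : W₂ a black vertex. Then for every tensor T : (Fin D → Fin N) → ℂ, Σ_{p : Fin D → Fin N} Tr^{v₁}_σ(T; p) · Tr_{τ,w₂}(T; p) = Tr_{σ ⋆_{(v₁,w₂)} τ}(T). -/
open scoped BigOperators

variable {D N : ℕ}

-- The colored gluing `σ ⋆_{(v₁,w₂)} τ` of two closed `D`-colored graphs at the white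
-- vertex `v₁` of the first and the black vertex `w₂` of the second: the two vertices are
-- deleted and the lines touching them are joined pairwise respecting the colors.
open Classical in
noncomputable def glue {V₁ W₁ V₂ W₂ : Type*}
    (σ : Fin D → V₁ ≃ W₁) (τ : Fin D → V₂ ≃ W₂) (v₁ : V₁) (w₂ : W₂) (i : Fin D) :
    ({v : V₁ // v ≠ v₁} ⊕ V₂) ≃ (W₁ ⊕ {w : W₂ // w ≠ w₂}) where
  toFun :=
    Sum.elim (fun v => Sum.inl (σ i v.1))
      (fun v => if h : τ i v = w₂ then Sum.inl (σ i v₁) else Sum.inr ⟨τ i v, h⟩)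
  invFun :=
    Sum.elim
      (fun w => if h : (σ i).symm w = v₁ then Sum.inr ((τ i).symm w₂)
        else Sum.inl ⟨(σ i).symm w, h⟩)
      (fun w => Sum.inr ((τ i).symm w.1))
  left_inv := by
    rintro (⟨v, hv⟩ | v)
    · simp only [Sum.elim_inl]
      rw [dif_neg (by simpa using hv)]
      simp
    · simp only [Sum.elim_inr]
      split_ifs with h
      · simp only [Sum.elim_inl]
        rw [dif_pos (by simp)]
        simp [← h]
      · simp
  right_inv := by
    rintro (w | ⟨w, hw⟩)
    · simp only [Sum.elim_inl]
      split_ifs with h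
      · simp only [Sum.elim_inr]
        rw [dif_pos (by simp), ← h]
        simp
      · simp
    · simp only [Sum.elim_inr, Equiv.apply_symm_apply]
      rw [dif_neg (by simpa using hw)]

-- The trace invariant `Tr_σ(T)` of the closed `D`-colored graph `σ`.
open Classical in
noncomputable def traceInv {V W : Type*} [Finite V] [Finite W]
    (σ : Fin D → V ≃ W) (T : (Fin D → Fin N) → ℂ) : ℂ :=
  letI := Fintype.ofFinite V
  letI := Fintype.ofFinite W
  ∑ a : V → Fin D → Fin N,
    (∏ v, T (a v)) * ∏ w, (starRingEnd ℂ) (T fun i => a ((σ i).symm w) i)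

-- The trace invariant opened at the white vertex `v₁`: the factor `T (a v₁)` is replaced
-- by the Kronecker delta `∏ i, δ_{a v₁ i, p i}`.
open Classical in
noncomputable def traceInvWhite {V W : Type*} [Finite V] [Finite W]
    (σ : Fin D → V ≃ W) (v₁ : V) (T : (Fin D → Fin N) → ℂ) (p : Fin D → Fin N) : ℂ :=
  letI := Fintype.ofFinite V
  letI := Fintype.ofFinite W
  ∑ a : V → Fin D → Fin N,
    (∏ v, if v = v₁ then ∏ i, (if a v i = p i then (1 : ℂ) else 0) else T (a v)) *
      ∏ w, (starRingEnd ℂ) (T fun i => a ((σ i).symm w) i)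

-- The trace invariant opened at the black vertex `w₁`: the factor
-- `conj (T (fun i => a ((σ i).symm w₁) i))` is replaced by the Kronecker delta.
open Classical in
noncomputable def traceInvBlack {V W : Type*} [Finite V] [Finite W]
    (σ : Fin D → V ≃ W) (w₁ : W) (T : (Fin D → Fin N) → ℂ) (p : Fin D → Fin N) : ℂ :=
  letI := Fintype.ofFinite V
  letI := Fintype.ofFinite W
  ∑ a : V → Fin D → Fin N,
    (∏ v, T (a v)) *
      ∏ w, if w = w₁ then ∏ i, (if a ((σ i).symm w) i = p i then (1 : ℂ) else 0)
        else (starRingEnd ℂ) (T fun i => a ((σ i).symm w) i)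

theorem sum_fintype_congr {α M : Type*} [AddCommMonoid M] (i₁ i₂ : Fintype α) (f : α → M) :
    (@Finset.univ α i₁).sum f = (@Finset.univ α i₂).sum f := by
  rw [Subsingleton.elim i₁ i₂]

theorem prod_fintype_congr {α M : Type*} [CommMonoid M] (i₁ i₂ : Fintype α) (f : α → M) :
    (@Finset.univ α i₁).prod f = (@Finset.univ α i₂).prod f := by
  rw [Subsingleton.elim i₁ i₂]

/-- Gluing identity for trace invariants:
`Σ_p Tr^{v₁}_σ(T;p) · Tr_{τ,w₂}(T;p) = Tr_{σ ⋆_{(v₁,w₂)} τ}(T)`. -/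
theorem glue_trace_identity {D N : ℕ} (hD : 1 ≤ D) (hN : 1 ≤ N)
    {V₁ W₁ V₂ W₂ : Type*} [Finite V₁] [Finite W₁] [Finite V₂] [Finite W₂]
    (σ : Fin D → V₁ ≃ W₁) (τ : Fin D → V₂ ≃ W₂) (v₁ : V₁) (w₂ : W₂)
    (T : (Fin D → Fin N) → ℂ) :
    ∑ p : Fin D → Fin N, traceInvWhite σ v₁ T p * traceInvBlack τ w₂ T p
      = traceInv (glue σ τ v₁ w₂) T := by
  classical
  letI := Fintype.ofFinite V₁
  letI := Fintype.ofFinite W₁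
  letI := Fintype.ofFinite V₂
  letI := Fintype.ofFinite W₂
  set q : (V₂ → Fin D → Fin N) → Fin D → Fin N := fun a₂ i => a₂ ((τ i).symm w₂) i with hq
  set C₁ : (V₁ → Fin D → Fin N) → ℂ := fun a₁ =>
    (∏ v ∈ Finset.univ.erase v₁, T (a₁ v)) *
      ∏ w : W₁, (starRingEnd ℂ) (T fun i => a₁ ((σ i).symm w) i) with hC₁
  set C₂ : (V₂ → Fin D → Fin N) → ℂ := fun a₂ =>
    (∏ v, T (a₂ v)) *
      ∏ w ∈ Finset.univ.erase w₂, (starRingEnd ℂ) (T fun i => a₂ ((τ i).symm w) i) with hC₂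
  have hdelta : ∀ (a p : Fin D → Fin N),
      (∏ i, if a i = p i then (1:ℂ) else 0) = if a = p then 1 else 0 := by
    intro a p
    rw [Finset.prod_boole]
    simp [funext_iff]
  have h1 : ∀ p, traceInvWhite (N := N) σ v₁ T p
      = ∑ a₁ : V₁ → Fin D → Fin N, (if a₁ v₁ = p then (1:ℂ) else 0) * C₁ a₁ := by
    intro p
    unfold traceInvWhite
    refine Finset.sum_congr rfl fun a _ => ?_
    rw [← Finset.mul_prod_erase _ _ (Finset.mem_univ v₁)]
    rw [if_pos rfl, hdelta]
    rw [Finset.prod_congr rfl (fun v hv => if_neg (Finset.mem_erase.1 hv).1)]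
    ring
  have h2 : ∀ p, traceInvBlack (N := N) τ w₂ T p
      = ∑ a₂ : V₂ → Fin D → Fin N, (if q a₂ = p then (1:ℂ) else 0) * C₂ a₂ := by
    intro p
    unfold traceInvBlack
    refine Finset.sum_congr rfl fun a _ => ?_
    rw [← Finset.mul_prod_erase _ _ (Finset.mem_univ w₂)]
    rw [if_pos rfl, hdelta]
    rw [Finset.prod_congr rfl (fun w hw => if_neg (Finset.mem_erase.1 hw).1)]
    ring
  have hsum : ∀ (x y : Fin D → Fin N),
      (∑ p : Fin D → Fin N, (if x = p then (1:ℂ) else 0) * (if y = p then 1 else 0))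
        = if x = y then 1 else 0 := by
    intro x y
    simp only [ite_mul, one_mul, zero_mul, Finset.sum_ite_eq, Finset.mem_univ, if_true]
    simp [eq_comm]
  have e₁ := Equiv.piSplitAt v₁ (fun _ : V₁ => Fin D → Fin N)
  have hA : ∀ (a₂ : V₂ → Fin D → Fin N) (b₁ : {v : V₁ // v ≠ v₁} → Fin D → Fin N) (v : V₁),
      (Equiv.piSplitAt v₁ (fun _ : V₁ => Fin D → Fin N)).symm (q a₂, b₁) v
        = if h : v = v₁ then q a₂ else b₁ ⟨v, h⟩ := by
    intro a₂ b₁ v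
    by_cases h : v = v₁
    · subst h; simp
    · simp [h]
  have h3 : ∑ p : Fin D → Fin N, traceInvWhite σ v₁ T p * traceInvBlack τ w₂ T p
      = ∑ a₂ : V₂ → Fin D → Fin N, ∑ b₁ : {v : V₁ // v ≠ v₁} → Fin D → Fin N,
          C₁ ((Equiv.piSplitAt v₁ (fun _ : V₁ => Fin D → Fin N)).symm (q a₂, b₁)) * C₂ a₂ := by
    calc ∑ p : Fin D → Fin N, traceInvWhite σ v₁ T p * traceInvBlack τ w₂ T p
        = ∑ p : Fin D → Fin N, ∑ a₁ : V₁ → Fin D → Fin N, ∑ a₂ : V₂ → Fin D → Fin N,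
            ((if a₁ v₁ = p then (1:ℂ) else 0) * (if q a₂ = p then 1 else 0))
              * (C₁ a₁ * C₂ a₂) := by
          refine Finset.sum_congr rfl fun p _ => ?_
          rw [h1, h2, Finset.sum_mul_sum]
          exact Finset.sum_congr rfl fun a₁ _ => Finset.sum_congr rfl fun a₂ _ => by ring
      _ = ∑ a₁ : V₁ → Fin D → Fin N, ∑ a₂ : V₂ → Fin D → Fin N,
            (if a₁ v₁ = q a₂ then (1:ℂ) else 0) * (C₁ a₁ * C₂ a₂) := by
          rw [Finset.sum_comm]
          refine Finset.sum_congr rfl fun a₁ _ => ?_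
          rw [Finset.sum_comm]
          refine Finset.sum_congr rfl fun a₂ _ => ?_
          rw [← Finset.sum_mul, hsum]
      _ = ∑ a₂ : V₂ → Fin D → Fin N, ∑ a₁ : V₁ → Fin D → Fin N,
            (if a₁ v₁ = q a₂ then (1:ℂ) else 0) * (C₁ a₁ * C₂ a₂) := Finset.sum_comm
      _ = ∑ a₂ : V₂ → Fin D → Fin N,
            ∑ pr : (Fin D → Fin N) × ({v : V₁ // v ≠ v₁} → Fin D → Fin N),
            (if ((Equiv.piSplitAt v₁ (fun _ : V₁ => Fin D → Fin N)).symm pr) v₁ = q a₂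
              then (1:ℂ) else 0)
              * (C₁ ((Equiv.piSplitAt v₁ (fun _ : V₁ => Fin D → Fin N)).symm pr) * C₂ a₂) := by
          refine Finset.sum_congr rfl fun a₂ _ => ?_
          exact (Equiv.sum_comp (Equiv.piSplitAt v₁ (fun _ : V₁ => Fin D → Fin N)).symm _).symm
      _ = ∑ a₂ : V₂ → Fin D → Fin N, ∑ b₁ : {v : V₁ // v ≠ v₁} → Fin D → Fin N,
            C₁ ((Equiv.piSplitAt v₁ (fun _ : V₁ => Fin D → Fin N)).symm (q a₂, b₁)) * C₂ a₂ := by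
          refine Finset.sum_congr rfl fun a₂ _ => ?_
          rw [Fintype.sum_prod_type]
          rw [Finset.sum_comm]
          refine Finset.sum_congr rfl fun b₁ _ => ?_
          have hv : ∀ x : Fin D → Fin N,
              ((Equiv.piSplitAt v₁ (fun _ : V₁ => Fin D → Fin N)).symm (x, b₁)) v₁ = x := by
            intro x; simp
          simp only [hv, ite_mul, one_mul, zero_mul]
          rw [Finset.sum_ite_eq' Finset.univ (q a₂)]
          simp
  have h4 : traceInv (N := N) (glue σ τ v₁ w₂) T
      = ∑ pr : (V₂ → Fin D → Fin N) × ({v : V₁ // v ≠ v₁} → Fin D → Fin N),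
          (∏ v : {v : V₁ // v ≠ v₁} ⊕ V₂, T (Sum.elim pr.2 pr.1 v)) *
            ∏ w : W₁ ⊕ {w : W₂ // w ≠ w₂},
              (starRingEnd ℂ) (T fun i => Sum.elim pr.2 pr.1 ((glue σ τ v₁ w₂ i).symm w) i) := by
    unfold traceInv
    refine Eq.trans (sum_fintype_congr _ inferInstance _) ?_
    apply Fintype.sum_equiv ((Equiv.sumArrowEquivProdArrow {v : V₁ // v ≠ v₁} V₂
      (Fin D → Fin N)).trans (Equiv.prodComm _ _))
    intro a
    have ha : Sum.elim
        (((Equiv.sumArrowEquivProdArrow {v : V₁ // v ≠ v₁} V₂ (Fin D → Fin N)).trans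
          (Equiv.prodComm _ _)) a).2
        (((Equiv.sumArrowEquivProdArrow {v : V₁ // v ≠ v₁} V₂ (Fin D → Fin N)).trans
          (Equiv.prodComm _ _)) a).1 = a :=
      funext fun x => by cases x <;> rfl
    rw [ha]
    exact congrArg₂ (· * ·) (prod_fintype_congr _ _ _) (prod_fintype_congr _ _ _)
  have h5 : (∑ pr : (V₂ → Fin D → Fin N) × ({v : V₁ // v ≠ v₁} → Fin D → Fin N),
          (∏ v : {v : V₁ // v ≠ v₁} ⊕ V₂, T (Sum.elim pr.2 pr.1 v)) *
            ∏ w : W₁ ⊕ {w : W₂ // w ≠ w₂},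
              (starRingEnd ℂ) (T fun i => Sum.elim pr.2 pr.1 ((glue σ τ v₁ w₂ i).symm w) i))
      = ∑ a₂ : V₂ → Fin D → Fin N, ∑ b₁ : {v : V₁ // v ≠ v₁} → Fin D → Fin N,
          (∏ v : {v : V₁ // v ≠ v₁} ⊕ V₂, T (Sum.elim b₁ a₂ v)) *
            ∏ w : W₁ ⊕ {w : W₂ // w ≠ w₂},
              (starRingEnd ℂ) (T fun i => Sum.elim b₁ a₂ ((glue σ τ v₁ w₂ i).symm w) i) := by
    rw [Fintype.sum_prod_type]
  rw [h3, h4, h5]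
  refine Finset.sum_congr rfl fun a₂ _ => Finset.sum_congr rfl fun b₁ _ => ?_
  -- pointwise identity
  set A : V₁ → Fin D → Fin N :=
    (Equiv.piSplitAt v₁ (fun _ : V₁ => Fin D → Fin N)).symm (q a₂, b₁) with hAdef
  have hAv : ∀ v : V₁, A v = if h : v = v₁ then q a₂ else b₁ ⟨v, h⟩ := hA a₂ b₁
  have P1 : ∏ v ∈ Finset.univ.erase v₁, T (A v) = ∏ v : {v : V₁ // v ≠ v₁}, T (b₁ v) := by
    rw [Finset.prod_subtype (p := fun v => v ≠ v₁) (Finset.univ.erase v₁)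
      (fun v => by simp) (fun v => T (A v))]
    refine Finset.prod_congr rfl fun v _ => ?_
    rw [hAv, dif_neg v.2]
  have P2 : ∀ w : W₁, (fun i => A ((σ i).symm w) i)
      = fun i => Sum.elim b₁ a₂ ((glue σ τ v₁ w₂ i).symm (Sum.inl w)) i := by
    intro w
    funext i
    rw [hAv]
    simp only [glue, Equiv.coe_fn_symm_mk, Sum.elim_inl]
    split_ifs with h <;> simp [hq]
  have P3 : ∏ w ∈ Finset.univ.erase w₂,
        (starRingEnd ℂ) (T fun i => a₂ ((τ i).symm w) i)
      = ∏ w : {w : W₂ // w ≠ w₂},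
        (starRingEnd ℂ) (T fun i => Sum.elim b₁ a₂ ((glue σ τ v₁ w₂ i).symm (Sum.inr w)) i) := by
    rw [Finset.prod_subtype (p := fun w => w ≠ w₂) (Finset.univ.erase w₂)
      (fun w => by simp) (fun w => (starRingEnd ℂ) (T fun i => a₂ ((τ i).symm w) i))]
    refine Finset.prod_congr rfl fun w _ => ?_
    have hgw : (fun i => Sum.elim b₁ a₂ ((glue σ τ v₁ w₂ i).symm (Sum.inr w)) i)
        = fun i => a₂ ((τ i).symm w.1) i := funext fun i => by simp [glue]
    rw [hgw]
  rw [Fintype.prod_sum_type, Fintype.prod_sum_type]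
  simp only [Sum.elim_inl, Sum.elim_inr]
  rw [hC₁, hC₂]
  simp only
  rw [P1, P3]
  have P2' : (∏ w : W₁, (starRingEnd ℂ) (T fun i => A ((σ i).symm w) i))
      = ∏ w : W₁, (starRingEnd ℂ)
          (T fun i => Sum.elim b₁ a₂ ((glue σ τ v₁ w₂ i).symm (Sum.inl w)) i) :=
    Finset.prod_congr rfl fun w _ => by rw [P2 w]
  rw [P2']
  ring
end

section
/- Contraction identity for trace invariants: let (V, W, σ) be a closed D-colored graph, v₁ : V a white vertex and w₁ : W a black vertex. Then for every tensor T : (Fin D → Fin N) → ℂ, Σ_{p : Fin D → Fin N} Tr^{v₁}_{σ,w₁}(T; p) = N^{d(v₁,w₁)} · Tr_{σ/(v₁,w₁)}(T), where d(v₁,w₁) = card {i : Fin D | σ i v₁ = w₁} and, by convention, the trace invariant of a graph with empty vertex set equals 1. -/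
open scoped BigOperators

variable {D N : ℕ}

-- The colored contraction `σ/(v₁,w₁)` of a closed `D`-colored graph with respect to the
-- white vertex `v₁` and the black vertex `w₁`: the two vertices are deleted and the lines
-- touching them are reconnected pairwise respecting the colors.
open Classical in
noncomputable def contract {V W : Type*} (σ : Fin D → V ≃ W) (v₁ : V) (w₁ : W) (i : Fin D) :
    {v : V // v ≠ v₁} ≃ {w : W // w ≠ w₁} where
  toFun v :=
    if h : σ i v.1 = w₁ then ⟨σ i v₁, fun hc => v.2 ((σ i).injective (h.trans hc.symm))⟩
    else ⟨σ i v.1, h⟩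
  invFun w :=
    if h : (σ i).symm w.1 = v₁ then
      ⟨(σ i).symm w₁, fun hc => w.2 ((σ i).symm.injective (h.trans hc.symm))⟩
    else ⟨(σ i).symm w.1, h⟩
  left_inv := by
    rintro ⟨x, hx⟩
    dsimp only
    by_cases h : σ i x = w₁
    · rw [dif_pos h, dif_pos (by simp)]
      exact Subtype.ext (by simp [← h])
    · rw [dif_neg h, dif_neg (by simpa using hx)]
      simp
  right_inv := by
    rintro ⟨y, hy⟩
    dsimp only
    by_cases h : (σ i).symm y = v₁
    · rw [dif_pos h, dif_pos (by simp)]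
      exact Subtype.ext (by simp [← h])
    · rw [dif_neg h, dif_neg (by simpa using hy)]
      simp

-- The trace invariant opened both at the white vertex `v₁` and at the black vertex `w₁`.
open Classical in
noncomputable def traceInvOpen {V W : Type*} [Finite V] [Finite W]
    (σ : Fin D → V ≃ W) (v₁ : V) (w₁ : W) (T : (Fin D → Fin N) → ℂ)
    (p : Fin D → Fin N) : ℂ :=
  letI := Fintype.ofFinite V
  letI := Fintype.ofFinite W
  ∑ a : V → Fin D → Fin N,
    (∏ v, if v = v₁ then ∏ i, (if a v i = p i then (1 : ℂ) else 0) else T (a v)) *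
      ∏ w, if w = w₁ then ∏ i, (if a ((σ i).symm w) i = p i then (1 : ℂ) else 0)
        else (starRingEnd ℂ) (T fun i => a ((σ i).symm w) i)

private lemma declass {α : Sort*} {c : Prop} [i : Decidable c] {t e : α} :
    (@ite α c (Classical.propDecidable c) t e) = if c then t else e := by
  rw [Subsingleton.elim (Classical.propDecidable c) i]

private lemma sum_prod_swap {D N : ℕ} (g : Fin D → Fin N → ℂ) :
    (∑ p : Fin D → Fin N, ∏ i, g i (p i)) = ∏ i, ∑ x : Fin N, g i x :=
  (Fintype.prod_sum g).symm

/-- Contraction identity for trace invariants: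
`Σ_p Tr^{v₁}_{σ,w₁}(T;p) = N^{d(v₁,w₁)} · Tr_{σ/(v₁,w₁)}(T)` where `d(v₁,w₁)` is the
number of colors `i` with `σ i v₁ = w₁` (the trace invariant of the empty graph being `1`). -/
theorem contract_trace_identity {D N : ℕ} (hD : 1 ≤ D) (hN : 1 ≤ N)
    {V W : Type*} [Finite V] [Finite W]
    (σ : Fin D → V ≃ W) (v₁ : V) (w₁ : W) (T : (Fin D → Fin N) → ℂ) :
    ∑ p : Fin D → Fin N, traceInvOpen σ v₁ w₁ T p
      = (N : ℂ) ^ (Nat.card {i : Fin D // σ i v₁ = w₁}) * traceInv (contract σ v₁ w₁) T := by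
  classical
  letI : Fintype V := Fintype.ofFinite V
  letI : Fintype W := Fintype.ofFinite W
  letI : Fintype {v : V // v ≠ v₁} := Fintype.ofFinite _
  letI : Fintype {w : W // w ≠ w₁} := Fintype.ofFinite _
  set d0 : Fin N := ⟨0, hN⟩ with hd0
  -- Step 1 : sum over p
  have step1 : ∑ p : Fin D → Fin N, traceInvOpen σ v₁ w₁ T p
      = ∑ a : V → Fin D → Fin N,
          (∏ i, if a v₁ i = a ((σ i).symm w₁) i then (1:ℂ) else 0) *
            ((∏ v ∈ Finset.univ.erase v₁, T (a v)) *
             ∏ w ∈ Finset.univ.erase w₁, (starRingEnd ℂ) (T fun i => a ((σ i).symm w) i)) := by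
    simp only [traceInvOpen]
    rw [Finset.sum_comm]
    refine Finset.sum_congr rfl fun a _ => ?_
    have hv : ∀ p : Fin D → Fin N,
        (∏ v, if v = v₁ then ∏ i, (if a v i = p i then (1:ℂ) else 0) else T (a v))
        = (∏ i, (if a v₁ i = p i then (1:ℂ) else 0)) * ∏ v ∈ Finset.univ.erase v₁, T (a v) := by
      intro p
      rw [← Finset.mul_prod_erase Finset.univ _ (Finset.mem_univ v₁), if_pos rfl]
      exact congrArg _ (Finset.prod_congr rfl fun v hv => if_neg (Finset.ne_of_mem_erase hv))
    have hw : ∀ p : Fin D → Fin N,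
        (∏ w, if w = w₁ then ∏ i, (if a ((σ i).symm w) i = p i then (1:ℂ) else 0)
            else (starRingEnd ℂ) (T fun i => a ((σ i).symm w) i))
        = (∏ i, (if a ((σ i).symm w₁) i = p i then (1:ℂ) else 0)) *
            ∏ w ∈ Finset.univ.erase w₁, (starRingEnd ℂ) (T fun i => a ((σ i).symm w) i) := by
      intro p
      rw [← Finset.mul_prod_erase Finset.univ _ (Finset.mem_univ w₁), if_pos rfl]
      exact congrArg _ (Finset.prod_congr rfl fun w hw => if_neg (Finset.ne_of_mem_erase hw))
    calc
      _ = ∑ p : Fin D → Fin N,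
            (∏ i, ((if a v₁ i = p i then (1:ℂ) else 0) *
              (if a ((σ i).symm w₁) i = p i then (1:ℂ) else 0))) *
            ((∏ v ∈ Finset.univ.erase v₁, T (a v)) *
             ∏ w ∈ Finset.univ.erase w₁, (starRingEnd ℂ) (T fun i => a ((σ i).symm w) i)) := by
          refine Finset.sum_congr rfl fun p _ => ?_
          rw [hv p, hw p, Finset.prod_mul_distrib]
          ring
      _ = (∑ p : Fin D → Fin N,
            ∏ i, ((if a v₁ i = p i then (1:ℂ) else 0) *
              (if a ((σ i).symm w₁) i = p i then (1:ℂ) else 0))) *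
            ((∏ v ∈ Finset.univ.erase v₁, T (a v)) *
             ∏ w ∈ Finset.univ.erase w₁, (starRingEnd ℂ) (T fun i => a ((σ i).symm w) i)) := by
          rw [Finset.sum_mul]
      _ = _ := by
          congr 1
          rw [sum_prod_swap (fun i x => (if a v₁ i = x then (1:ℂ) else 0) *
              (if a ((σ i).symm w₁) i = x then (1:ℂ) else 0))]
          refine Finset.prod_congr rfl fun i _ => ?_
          simp only [ite_mul, one_mul, zero_mul, Finset.sum_ite_eq, Finset.mem_univ, if_true]
          rcases eq_or_ne (a v₁ i) (a ((σ i).symm w₁) i) with h | h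
          · rw [h]
          · rw [if_neg (Ne.symm h), if_neg h]
  rw [step1, ← Equiv.sum_comp (Equiv.funSplitAt v₁ (Fin D → Fin N)).symm,
    Fintype.sum_prod_type_right]
  simp only [traceInv, Finset.mul_sum]
  refine Finset.sum_congr (by congr!) fun b _ => ?_
  -- notation
  set e := Equiv.funSplitAt v₁ (Fin D → Fin N) with he
  have hnev : ∀ i (h : ¬ σ i v₁ = w₁), (σ i).symm w₁ ≠ v₁ := by
    intro i h hc
    exact h (by rw [← hc, Equiv.apply_symm_apply])
  set β : Fin D → Fin N := fun i =>
    if h : σ i v₁ = w₁ then d0 else b ⟨(σ i).symm w₁, hnev i h⟩ i with hβ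
  have ha : ∀ c (v : V), e.symm (c, b) v = if h : v = v₁ then c else b ⟨v, h⟩ := by
    intro c v
    simp [he]
  have hav : ∀ c, e.symm (c, b) v₁ = c := fun c => by rw [ha]; exact dif_pos rfl
  -- rewrite each summand
  have hrw : ∀ c : Fin D → Fin N,
      (∏ i, if e.symm (c, b) v₁ i = e.symm (c, b) ((σ i).symm w₁) i then (1:ℂ) else 0) *
        ((∏ v ∈ Finset.univ.erase v₁, T (e.symm (c, b) v)) *
         ∏ w ∈ Finset.univ.erase w₁,
           (starRingEnd ℂ) (T fun i => e.symm (c, b) ((σ i).symm w) i))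
      = (∏ i, if σ i v₁ = w₁ then (1:ℂ) else (if c i = β i then 1 else 0)) *
        ((∏ v : {v : V // v ≠ v₁}, T (b v)) *
         ∏ w : {w : W // w ≠ w₁},
           (starRingEnd ℂ) (T fun i => b ((contract σ v₁ w₁ i).symm w) i)) := by
    intro c
    have hK : (∏ i, if e.symm (c, b) v₁ i = e.symm (c, b) ((σ i).symm w₁) i then (1:ℂ) else 0)
        = ∏ i, if σ i v₁ = w₁ then (1:ℂ) else (if c i = β i then 1 else 0) := by
      refine Finset.prod_congr rfl fun i _ => ?_
      rw [hav, ha]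
      by_cases h : σ i v₁ = w₁
      · have h' : (σ i).symm w₁ = v₁ := by rw [← h, Equiv.symm_apply_apply]
        rw [dif_pos h', if_pos rfl, if_pos h]
      · rw [dif_neg (hnev i h), if_neg h, hβ]
        simp only [dif_neg h]
    have hP : (∏ v ∈ Finset.univ.erase v₁, T (e.symm (c, b) v))
        = ∏ v : {v : V // v ≠ v₁}, T (b v) := by
      rw [Finset.prod_subtype (p := fun v => v ≠ v₁) (Finset.univ.erase v₁) (fun x => by simp)
        fun v => T (e.symm (c,b) v)]
      refine Finset.prod_congr rfl fun v _ => ?_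
      rw [ha, dif_neg v.2]
    rw [hK, hP]
    by_cases hz : (∏ i, if σ i v₁ = w₁ then (1:ℂ) else (if c i = β i then 1 else 0)) = 0
    · rw [hz, zero_mul, zero_mul]
    · have hce : ∀ i, ¬ σ i v₁ = w₁ → c i = β i := by
        intro i h
        have := Finset.prod_ne_zero_iff.mp hz i (Finset.mem_univ i)
        rw [if_neg h] at this
        by_contra hc
        rw [if_neg hc] at this
        exact this rfl
      congr 2
      rw [Finset.prod_subtype (p := fun w => w ≠ w₁) (Finset.univ.erase w₁) (fun x => by simp)
        fun w => (starRingEnd ℂ) (T fun i => e.symm (c, b) ((σ i).symm w) i)]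
      refine Finset.prod_congr rfl fun w _ => ?_
      congr 1
      refine congrArg T (funext fun i => ?_)
      rw [ha]
      simp only [contract, Equiv.coe_fn_symm_mk]
      by_cases h : (σ i).symm w.1 = v₁
      · have hne : ¬ σ i v₁ = w₁ := fun hh =>
          w.2 (((σ i).apply_symm_apply w.1).symm.trans ((congrArg (σ i) h).trans hh))
        rw [dif_pos h, dif_pos h, hce i hne, hβ]
        simp only [dif_neg hne]
      · rw [dif_neg h, dif_neg h]
  calc
    _ = (∑ c : Fin D → Fin N,
          ∏ i, if σ i v₁ = w₁ then (1:ℂ) else (if c i = β i then 1 else 0)) *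
        ((∏ v : {v : V // v ≠ v₁}, T (b v)) *
         ∏ w : {w : W // w ≠ w₁},
           (starRingEnd ℂ) (T fun i => b ((contract σ v₁ w₁ i).symm w) i)) := by
        rw [Finset.sum_mul]
        exact Finset.sum_congr rfl fun c _ => hrw c
    _ = _ := by
        congr 1
        rw [sum_prod_swap (fun i x => if σ i v₁ = w₁ then (1:ℂ) else (if x = β i then 1 else 0))]
        have : ∀ i : Fin D, (∑ x : Fin N,
            if σ i v₁ = w₁ then (1:ℂ) else (if x = β i then 1 else 0))
            = if σ i v₁ = w₁ then (N:ℂ) else 1 := by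
          intro i
          by_cases h : σ i v₁ = w₁
          · simp [h]
          · simp [h, Finset.sum_ite_eq']
        rw [Finset.prod_congr rfl fun i _ => this i, Finset.prod_ite _ _,
          Finset.prod_const, Finset.prod_const_one, mul_one,
          Nat.card_eq_fintype_card, Fintype.card_subtype]
end

section
/- Compatibility of gluing and contraction: let (V₁, W₁, σ) and (V₂, W₂, τ) be closed D-colored graphs, and let v₁ : V₁, w̄₁ : W₁, v₂ : V₂, w̄₂ : W₂. Then the contraction of the glued graph σ ⋆_{(v₁,w̄₂)} τ at the white vertex v₂ (viewed in the V₂ summand) and the black vertex w̄₁ (viewed in the W₁ summand) is isomorphic to the contraction of the glued graph τ ⋆_{(v₂,w̄₁)} σ at the white vertex v₁ and the black vertex w̄₂: [σ ⋆_{(v₁,w̄₂)} τ]/(v₂, w̄₁) ≅ [τ ⋆_{(v₂,w̄₁)} σ]/(v₁, w̄₂). -/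
open scoped BigOperators

variable {D N : ℕ}

/-- Isomorphism of closed `D`-colored graphs: a pair of bijections of the white and of the
black vertices commuting with all the colored bijections. -/
def GraphIso {V W V' W' : Type*} (σ : Fin D → V ≃ W) (σ' : Fin D → V' ≃ W') : Prop :=
  ∃ (f : V ≃ V') (g : W ≃ W'), ∀ i v, σ' i (f v) = g (σ i v)


/-- Swap the two summands of the white vertex set of a contracted glued graph. -/
def whiteSwap {A B : Type*} (a : A) (b : B) :
    {x : {v : A // v ≠ a} ⊕ B // x ≠ Sum.inr b} ≃ {x : {v : B // v ≠ b} ⊕ A // x ≠ Sum.inr a} where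
  toFun x := match x with
    | ⟨Sum.inl v, _⟩ => ⟨Sum.inr v.1, by simpa using v.2⟩
    | ⟨Sum.inr w, h⟩ => ⟨Sum.inl ⟨w, by simpa using h⟩, by simp⟩
  invFun x := match x with
    | ⟨Sum.inl v, _⟩ => ⟨Sum.inr v.1, by simpa using v.2⟩
    | ⟨Sum.inr w, h⟩ => ⟨Sum.inl ⟨w, by simpa using h⟩, by simp⟩
  left_inv := by rintro ⟨(⟨v, hv⟩ | w), h⟩ <;> rfl
  right_inv := by rintro ⟨(⟨v, hv⟩ | w), h⟩ <;> rfl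

/-- Swap the two summands of the black vertex set of a contracted glued graph. -/
def blackSwap {A B : Type*} (a : A) (b : B) :
    {x : A ⊕ {w : B // w ≠ b} // x ≠ Sum.inl a} ≃ {x : B ⊕ {w : A // w ≠ a} // x ≠ Sum.inl b} where
  toFun x := match x with
    | ⟨Sum.inl v, h⟩ => ⟨Sum.inr ⟨v, by simpa using h⟩, by simp⟩
    | ⟨Sum.inr w, _⟩ => ⟨Sum.inl w.1, by simpa using w.2⟩
  invFun x := match x with
    | ⟨Sum.inl v, h⟩ => ⟨Sum.inr ⟨v, by simpa using h⟩, by simp⟩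
    | ⟨Sum.inr w, _⟩ => ⟨Sum.inl w.1, by simpa using w.2⟩
  left_inv := by rintro ⟨(v | ⟨w, hw⟩), h⟩ <;> rfl
  right_inv := by rintro ⟨(v | ⟨w, hw⟩), h⟩ <;> rfl

/-- Compatibility of gluing and contraction:
`[σ ⋆_{(v₁,w̄₂)} τ]/(v₂,w̄₁) ≅ [τ ⋆_{(v₂,w̄₁)} σ]/(v₁,w̄₂)`. -/
theorem contract_glue_symm {D : ℕ} {V₁ W₁ V₂ W₂ : Type*}
    (σ : Fin D → V₁ ≃ W₁) (τ : Fin D → V₂ ≃ W₂)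
    (v₁ : V₁) (wb₁ : W₁) (v₂ : V₂) (wb₂ : W₂) :
    GraphIso (contract (glue σ τ v₁ wb₂) (Sum.inr v₂) (Sum.inl wb₁))
      (contract (glue τ σ v₂ wb₁) (Sum.inr v₁) (Sum.inl wb₂)) := by
  classical
  refine ⟨whiteSwap v₁ v₂, blackSwap wb₁ wb₂, ?_⟩
  rintro i ⟨(⟨v, hv⟩ | w), h⟩ <;>
    simp only [whiteSwap, blackSwap, contract, glue, Equiv.coe_fn_mk, Sum.elim_inl,
      Sum.elim_inr]
  all_goals try (split_ifs <;> try rfl)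
  all_goals try (split_ifs <;> try rfl)
  all_goals try simp_all [EmbeddingLike.apply_eq_iff_eq]
  all_goals try (split_ifs <;> try simp_all [EmbeddingLike.apply_eq_iff_eq])
  all_goals try simp_all [EmbeddingLike.apply_eq_iff_eq]
  all_goals try (
    first
      | (by_cases hb : (τ i) v₂ = wb₂ <;> by_cases hw : (τ i) w = wb₂ <;>
          first | rfl | simp_all [EmbeddingLike.apply_eq_iff_eq])
      | (by_cases hb : (τ i) v₂ = wb₂ <;>
          first | rfl | simp_all [EmbeddingLike.apply_eq_iff_eq]))
  all_goals
    first
      | (simp_all; done)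
      | exact absurd ((σ i).injective (by simp_all)) hv
      | exact absurd (congrArg Sum.inr ((τ i).injective (by simp_all))) h
end

section
/- Contraction commutes with gluing at distinct vertices: let (V₁, W₁, σ) and (V₂, W₂, τ) be closed D-colored graphs, v, v₁ : V₁ white vertices with v ≠ v₁, w̄₁ : W₁ a black vertex and w₂ : W₂ a black vertex. Then [σ ⋆_{(v,w₂)} τ]/(v₁, w̄₁) is isomorphic to [σ/(v₁,w̄₁)] ⋆_{(v,w₂)} τ, where on the left v₁ and w̄₁ are viewed as vertices of the glued graph, and on the right v is viewed as a white vertex of the contracted graph σ/(v₁,w̄₁). -/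
open scoped BigOperators

variable {D N : ℕ}

/-- Contraction commutes with gluing at distinct vertices:
`[σ ⋆_{(v,w₂)} τ]/(v₁,w̄₁) ≅ [σ/(v₁,w̄₁)] ⋆_{(v,w₂)} τ` for white vertices `v ≠ v₁`. -/
theorem contract_glue_comm {D : ℕ} {V₁ W₁ V₂ W₂ : Type*}
    (σ : Fin D → V₁ ≃ W₁) (τ : Fin D → V₂ ≃ W₂)
    (v v₁ : V₁) (hvv : v ≠ v₁) (wb₁ : W₁) (w₂ : W₂) :
    GraphIso (contract (glue σ τ v w₂) (Sum.inl ⟨v₁, Ne.symm hvv⟩) (Sum.inl wb₁))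
      (glue (contract σ v₁ wb₁) τ ⟨v, hvv⟩ w₂) := by
  classical
  refine ⟨⟨fun x => match x with
      | ⟨Sum.inl a, h⟩ => Sum.inl ⟨⟨a.1, fun hc => h (by exact congrArg Sum.inl (Subtype.ext hc))⟩,
          fun hc => a.2 (congrArg Subtype.val hc)⟩
      | ⟨Sum.inr b, _⟩ => Sum.inr b,
    fun x => match x with
      | Sum.inl a => ⟨Sum.inl ⟨a.1.1, fun hc => a.2 (Subtype.ext hc)⟩,
          fun hc => a.1.2 (congrArg Subtype.val (Sum.inl.inj hc))⟩
      | Sum.inr b => ⟨Sum.inr b, by simp⟩, ?_, ?_⟩,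
    ⟨fun y => match y with
      | ⟨Sum.inl w, h⟩ => Sum.inl ⟨w, fun hc => h (congrArg Sum.inl hc)⟩
      | ⟨Sum.inr s, _⟩ => Sum.inr s,
    fun y => match y with
      | Sum.inl w => ⟨Sum.inl w.1, fun hc => w.2 (Sum.inl.inj hc)⟩
      | Sum.inr s => ⟨Sum.inr s, by simp⟩, ?_, ?_⟩, ?_⟩
  · rintro ⟨(a | b), h⟩ <;> rfl
  · rintro ((a | b)) <;> rfl
  · rintro ⟨(w | s), h⟩ <;> rfl
  · rintro ((w | s)) <;> rfl
  · rintro i ⟨(⟨a, ha⟩ | b), h⟩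
    · simp only [Equiv.coe_fn_mk]
      simp only [glue, contract, Equiv.coe_fn_mk, Sum.elim_inl]
      split_ifs with h1 h2 h3 <;>
        first
          | rfl
          | exact absurd (congrArg Sum.inl h1) h2
          | exact absurd (Sum.inl.inj h3) h1
          | simp_all [Subtype.ext_iff, Sum.inl.injEq]
    · simp only [Equiv.coe_fn_mk]
      simp only [glue, contract, Equiv.coe_fn_mk, Sum.elim_inl, Sum.elim_inr]
      split_ifs with h1 h2 h3 h4 <;>
        first
          | rfl
          | exact absurd (congrArg Sum.inl h1) h2
          | exact absurd (Sum.inl.inj h3) h1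
          | exact absurd (congrArg Sum.inl h2) h3
          | exact absurd (Sum.inl.inj h4) h2
          | simp_all [Subtype.ext_iff, Sum.inl.injEq]
end

section
/- Associativity of colored gluing: let (V, W, σ), (V₁, W₁, σ₁), (V₂, W₂, σ₂) be closed D-colored graphs, v : V a white vertex, w̄₁ : W₁ a black vertex, v' : V₁ a white vertex and w̄₂ : W₂ a black vertex. Then σ ⋆_{(v,w̄₁)} (σ₁ ⋆_{(v',w̄₂)} σ₂) is isomorphic to (σ ⋆_{(v,w̄₁)} σ₁) ⋆_{(v',w̄₂)} σ₂, where the vertices v', w̄₁, w̄₂ are viewed as the corresponding vertices of the intermediate glued graphs. -/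
open scoped BigOperators

variable {D N : ℕ}

/-- Associativity of the colored gluing:
`σ ⋆_{(v,w̄₁)} (σ₁ ⋆_{(v',w̄₂)} σ₂) ≅ (σ ⋆_{(v,w̄₁)} σ₁) ⋆_{(v',w̄₂)} σ₂`. -/
theorem glue_assoc {D : ℕ} {V W V₁ W₁ V₂ W₂ : Type*}
    (σ : Fin D → V ≃ W) (σ₁ : Fin D → V₁ ≃ W₁) (σ₂ : Fin D → V₂ ≃ W₂)
    (v : V) (wb₁ : W₁) (v' : V₁) (wb₂ : W₂) :
    GraphIso (glue σ (glue σ₁ σ₂ v' wb₂) v (Sum.inl wb₁))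
      (glue (glue σ σ₁ v wb₁) σ₂ (Sum.inr v') wb₂) := by
  classical
  refine ⟨⟨?_, ?_, ?_, ?_⟩, ⟨?_, ?_, ?_, ?_⟩, ?_⟩
  · exact Sum.elim (fun x => Sum.inl ⟨Sum.inl x, by simp⟩)
      (Sum.elim (fun y => Sum.inl ⟨Sum.inr y.1, by simp [y.2]⟩) (fun z => Sum.inr z))
  · exact Sum.elim (fun p => Sum.rec (fun x _ => Sum.inl x)
      (fun y h => Sum.inr (Sum.inl ⟨y, by simpa using h⟩)) p.1 p.2)
      (fun z => Sum.inr (Sum.inr z))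
  · rintro (x | (y | z)) <;> simp
  · rintro (⟨(x | y), h⟩ | z)
    · simp
    · simp
    · simp
  · exact Sum.elim (fun w => Sum.inl (Sum.inl w))
      (fun p => Sum.rec (fun w₁ h => Sum.inl (Sum.inr ⟨w₁, by simpa using h⟩))
        (fun w₂ _ => Sum.inr w₂) p.1 p.2)
  · exact Sum.elim (Sum.elim (fun w => Sum.inl w)
      (fun w₁ => Sum.inr ⟨Sum.inl w₁.1, by simp [w₁.2]⟩))
      (fun w₂ => Sum.inr ⟨Sum.inr w₂, by simp⟩)
  · rintro (w | ⟨(w₁ | w₂), h⟩)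
    · simp
    · simp
    · simp
  · rintro ((w | w₁) | w₂)
    · simp
    · simp
    · simp
  · rintro i (⟨x, hx⟩ | (⟨y, hy⟩ | z))
    · simp only [glue, Equiv.coe_fn_mk, Sum.elim_inl, Sum.elim_inr]
    · simp only [glue, Equiv.coe_fn_mk, Sum.elim_inl, Sum.elim_inr]
      split_ifs with h1 h2 h3
      · simp [h1]
      · exact absurd (congrArg Sum.inl h1) h2
      · exact absurd (Sum.inl.inj h3) h1
      · simp [h1]
    · simp only [glue, Equiv.coe_fn_mk, Sum.elim_inl, Sum.elim_inr]
      split_ifs with h1 h2 h3 h4 h5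
      · rfl
      · exact absurd (congrArg Sum.inl h2) h3
      · exact absurd (Sum.inl.inj h4) h2
      · rfl
      · exact h5.elim
      · rfl
end

section
/- The colored gluing of two connected closed D-colored graphs is connected: if (V₁, W₁, σ) and (V₂, W₂, τ) are connected closed D-colored graphs with V₁ and V₂ nonempty, then for every white vertex v₁ : V₁ and black vertex w₂ : W₂ the glued graph σ ⋆_{(v₁,w₂)} τ is connected. -/
open scoped BigOperators

variable {D N : ℕ}

/-- The subgroup of the permutations of the white vertices generated by the
`(σ i).trans (σ j).symm`. -/
def bubbleGroup {V W : Type*} (σ : Fin D → V ≃ W) : Subgroup (Equiv.Perm V) :=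
  Subgroup.closure {π : Equiv.Perm V | ∃ i j, π = (σ i).trans (σ j).symm}

/-- A closed `D`-colored graph is connected when `bubbleGroup σ` acts transitively on the
white vertices. -/
def IsConnectedGraph {V W : Type*} (σ : Fin D → V ≃ W) : Prop :=
  ∀ v v' : V, ∃ g ∈ bubbleGroup σ, g v = v'

/-- The setoid on the white vertices whose classes are the connected components of the
graph. -/
def reachSetoid {V W : Type*} (σ : Fin D → V ≃ W) : Setoid V where
  r x y := ∃ g ∈ bubbleGroup σ, g x = y
  iseqv := by
    constructor
    · exact fun x => ⟨1, one_mem _, rfl⟩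
    · rintro x y ⟨g, hg, rfl⟩
      exact ⟨g⁻¹, inv_mem hg, by simp⟩
    · rintro x y z ⟨g, hg, rfl⟩ ⟨g', hg', rfl⟩
      exact ⟨g' * g, mul_mem hg' hg, by simp⟩

section ReachAux

variable {V W : Type*}

def reachAux {D : ℕ} (ρ : Fin D → V ≃ W) (x y : V) : Prop :=
  ∃ g ∈ bubbleGroup ρ, g x = y

lemma reachAux_refl {D : ℕ} (ρ : Fin D → V ≃ W) (x : V) : reachAux ρ x x := ⟨1, one_mem _, rfl⟩

lemma reachAux_symm {D : ℕ} {ρ : Fin D → V ≃ W} {x y : V} (h : reachAux ρ x y) :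
    reachAux ρ y x := by
  obtain ⟨g, hg, rfl⟩ := h
  exact ⟨g⁻¹, inv_mem hg, by simp⟩

lemma reachAux_trans {D : ℕ} {ρ : Fin D → V ≃ W} {x y z : V} (h : reachAux ρ x y)
    (h' : reachAux ρ y z) : reachAux ρ x z := by
  obtain ⟨g, hg, rfl⟩ := h
  obtain ⟨g', hg', rfl⟩ := h'
  exact ⟨g' * g, mul_mem hg' hg, by simp⟩

lemma reachAux_step {D : ℕ} {ρ : Fin D → V ≃ W} {x y : V} (i j : Fin D)
    (h : ρ i x = ρ j y) : reachAux ρ x y := by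
  refine ⟨(ρ i).trans (ρ j).symm, Subgroup.subset_closure ⟨i, j, rfl⟩, ?_⟩
  simp [Equiv.trans_apply, h]

lemma image_reachClass_eq {D : ℕ} (ρ : Fin D → V ≃ W) (t : V) (i j : Fin D) :
    ρ i '' {y | reachAux ρ t y} = ρ j '' {y | reachAux ρ t y} := by
  have key : ∀ i j : Fin D, ρ i '' {y | reachAux ρ t y} ⊆ ρ j '' {y | reachAux ρ t y} := by
    rintro i j _ ⟨x, hx, rfl⟩
    exact ⟨(ρ j).symm (ρ i x), reachAux_trans hx (reachAux_step i j (by simp)), by simp⟩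
  exact (key i j).antisymm (key j i)

end ReachAux

/-- The colored gluing of two connected closed `D`-colored graphs is
connected. -/
theorem glue_connected {D : ℕ} (hD : 1 ≤ D) {V₁ W₁ V₂ W₂ : Type*}
    [Finite V₁] [Finite W₁] [Finite V₂] [Finite W₂]
    (σ : Fin D → V₁ ≃ W₁) (τ : Fin D → V₂ ≃ W₂)
    (hne₁ : Nonempty V₁) (hne₂ : Nonempty V₂)
    (hc₁ : IsConnectedGraph σ) (hc₂ : IsConnectedGraph τ)
    (v₁ : V₁) (w₂ : W₂) :
    IsConnectedGraph (glue σ τ v₁ w₂) := by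
  classical
  set G : Fin D → ({v : V₁ // v ≠ v₁} ⊕ V₂) ≃ (W₁ ⊕ {w : W₂ // w ≠ w₂}) :=
    glue σ τ v₁ w₂ with hGdef
  set i0 : Fin D := ⟨0, hD⟩ with hi0
  -- computation rules for `G`
  have hGinl : ∀ (i : Fin D) (v : V₁) (hv : v ≠ v₁),
      G i (Sum.inl ⟨v, hv⟩) = Sum.inl (σ i v) := by
    intro i v hv
    simp [hGdef, glue]
  have hGw : ∀ i : Fin D, G i (Sum.inr ((τ i).symm w₂)) = Sum.inl (σ i v₁) := by
    intro i
    simp [hGdef, glue]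
  have hGinr : ∀ (i : Fin D) (v : V₂) (h : τ i v ≠ w₂),
      G i (Sum.inr v) = Sum.inr ⟨τ i v, h⟩ := by
    intro i v h
    simp [hGdef, glue, h]
  -- the counting argument: each `inr ((τ i).symm w₂)` is reachable from the basepoint
  have claimC : ∀ i : Fin D,
      reachAux G (Sum.inr ((τ i0).symm w₂)) (Sum.inr ((τ i).symm w₂)) := by
    intro i
    by_contra hcon
    set C : Set ({v : V₁ // v ≠ v₁} ⊕ V₂) :=
      {y | reachAux G (Sum.inr ((τ i0).symm w₂)) y} with hC
    have hCi0 : Sum.inr ((τ i0).symm w₂) ∈ C := reachAux_refl G _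
    have hv₁C₁ : v₁ ∉ {v : V₁ | ∃ hv : v ≠ v₁, Sum.inl ⟨v, hv⟩ ∈ C} := by
      rintro ⟨hv, -⟩
      exact hv rfl
    set C₁ : Set V₁ := {v : V₁ | ∃ hv : v ≠ v₁, Sum.inl ⟨v, hv⟩ ∈ C} with hC₁
    have hchar : ∀ (k : Fin D) (w : W₁), Sum.inl w ∈ G k '' C ↔
        (w ∈ σ k '' C₁ ∨ (Sum.inr ((τ k).symm w₂) ∈ C ∧ w = σ k v₁)) := by
      intro k w
      constructor
      · rintro ⟨x, hx, hGx⟩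
        rcases x with ⟨v, hv⟩ | v
        · rw [hGinl k v hv] at hGx
          exact Or.inl ⟨v, ⟨hv, hx⟩, Sum.inl.inj hGx⟩
        · by_cases hw : τ k v = w₂
          · have hveq : v = (τ k).symm w₂ := by rw [← hw]; simp
            subst hveq
            rw [hGw k] at hGx
            exact Or.inr ⟨hx, (Sum.inl.inj hGx).symm⟩
          · rw [hGinr k v hw] at hGx
            exact absurd hGx (by simp)
      · rintro (⟨v, ⟨hv, hvC⟩, rfl⟩ | ⟨h1, rfl⟩)
        · exact ⟨Sum.inl ⟨v, hv⟩, hvC, hGinl k v hv⟩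
        · exact ⟨Sum.inr ((τ k).symm w₂), h1, hGw k⟩
    have hset : ∀ k : Fin D, {w : W₁ | Sum.inl w ∈ G k '' C}
        = σ k '' C₁ ∪ (if Sum.inr ((τ k).symm w₂) ∈ C then {σ k v₁} else ∅) := by
      intro k
      ext w
      rw [Set.mem_setOf_eq, hchar k w]
      by_cases h : Sum.inr ((τ k).symm w₂) ∈ C <;>
        simp [h, or_comm]
    have himg : {w : W₁ | Sum.inl w ∈ G i '' C} = {w : W₁ | Sum.inl w ∈ G i0 '' C} := by
      rw [hC, image_reachClass_eq G _ i i0]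
    have hcon' : Sum.inr ((τ i).symm w₂) ∉ C := hcon
    rw [hset i, hset i0, if_neg hcon', if_pos hCi0, Set.union_empty] at himg
    have hnotmem : σ i0 v₁ ∉ σ i0 '' C₁ := by
      rintro ⟨v, hv, hveq⟩
      exact hv₁C₁ (((σ i0).injective hveq) ▸ hv)
    have hcard := congrArg Set.ncard himg
    rw [Set.ncard_image_of_injective _ (σ i).injective, Set.union_singleton,
        Set.ncard_insert_of_notMem hnotmem,
        Set.ncard_image_of_injective _ (σ i0).injective] at hcard
    omega
  -- all vertices coming from `V₂` are reachable from the basepoint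
  have h2 : ∀ v : V₂, reachAux G (Sum.inr ((τ i0).symm w₂)) (Sum.inr v) := by
    have key : ∀ g ∈ bubbleGroup τ, ∀ v : V₂,
        (reachAux G (Sum.inr ((τ i0).symm w₂)) (Sum.inr v) ↔
          reachAux G (Sum.inr ((τ i0).symm w₂)) (Sum.inr (g v))) := by
      intro g hg
      refine Subgroup.closure_induction ?_ ?_ ?_ ?_ hg
      · rintro π ⟨i, j, rfl⟩ v
        by_cases hw : τ i v = w₂
        · have h1 : v = (τ i).symm w₂ := by rw [← hw]; simp
          refine iff_of_true (by rw [h1]; exact claimC i) ?_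
          have : ((τ i).trans (τ j).symm) v = (τ j).symm w₂ := by
            simp [Equiv.trans_apply, hw]
          show reachAux G _ (Sum.inr (((τ i).trans (τ j).symm) v))
          rw [this]
          exact claimC j
        · have hv' : τ j (((τ i).trans (τ j).symm) v) = τ i v := by simp
          have hstep : reachAux G (Sum.inr v) (Sum.inr (((τ i).trans (τ j).symm) v)) := by
            apply reachAux_step i j
            rw [hGinr i v hw, hGinr j _ (by rw [hv']; exact hw)]
            simp [Sum.inr.injEq, Subtype.ext_iff, hv']
          exact ⟨fun h => reachAux_trans h hstep,
            fun h => reachAux_trans h (reachAux_symm hstep)⟩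
      · intro v
        exact Iff.rfl
      · intro a b ha hb pa pb v
        exact (pb v).trans (pa (b v))
      · intro a ha pa v
        have := pa (a⁻¹ v)
        rw [show a (a⁻¹ v) = v from a.apply_symm_apply v] at this
        exact this.symm
    intro v
    obtain ⟨g, hg, hgv⟩ := hc₂ v ((τ i0).symm w₂)
    have h := key g hg v
    rw [hgv] at h
    exact h.mpr (reachAux_refl G _)
  -- bridging from V₂ into V₁
  have hbridge : ∀ (i j : Fin D) (v' : V₁) (hv' : v' ≠ v₁) (h : σ j v' = σ i v₁),
      reachAux G (Sum.inr ((τ i0).symm w₂)) (Sum.inl ⟨v', hv'⟩) := by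
    intro i j v' hv' h
    refine reachAux_trans (claimC i) (reachAux_step i j ?_)
    rw [hGw i, hGinl j v' hv', h]
  -- all vertices coming from `V₁` are reachable from the basepoint
  have h1 : ∀ (v : V₁) (hv : v ≠ v₁),
      reachAux G (Sum.inr ((τ i0).symm w₂)) (Sum.inl ⟨v, hv⟩) := by
    have key : ∀ g ∈ bubbleGroup σ, ∀ v : V₁,
        ((∀ hv : v ≠ v₁, reachAux G (Sum.inr ((τ i0).symm w₂)) (Sum.inl ⟨v, hv⟩)) ↔
          (∀ hv : g v ≠ v₁, reachAux G (Sum.inr ((τ i0).symm w₂)) (Sum.inl ⟨g v, hv⟩))) := by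
      intro g hg
      refine Subgroup.closure_induction ?_ ?_ ?_ ?_ hg
      · rintro π ⟨i, j, rfl⟩ v
        show (∀ hv : v ≠ v₁, _) ↔ (∀ hv : ((σ i).trans (σ j).symm) v ≠ v₁, _)
        by_cases hv : v = v₁
        · subst hv
          refine iff_of_true (fun hv => absurd rfl hv) ?_
          intro hv'
          refine hbridge i j _ hv' ?_
          simp [Equiv.trans_apply]
        · by_cases hv2 : ((σ i).trans (σ j).symm) v = v₁
          · refine iff_of_true (fun _ => ?_) (fun hv' => absurd hv2 hv')
            refine hbridge j i v hv ?_
            have : (σ j).symm (σ i v) = v₁ := by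
              simpa [Equiv.trans_apply] using hv2
            rw [← this]
            simp
          · have hstep : reachAux G (Sum.inl ⟨v, hv⟩)
                (Sum.inl ⟨((σ i).trans (σ j).symm) v, hv2⟩) := by
              apply reachAux_step i j
              rw [hGinl i v hv, hGinl j _ hv2]
              simp [Equiv.trans_apply]
            exact ⟨fun H hv' => reachAux_trans (H hv) hstep,
              fun H hv' => reachAux_trans (H hv2) (reachAux_symm hstep)⟩
      · intro v
        exact Iff.rfl
      · intro a b ha hb pa pb v
        exact (pb v).trans (pa (b v))
      · intro a ha pa v
        have := pa (a⁻¹ v)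
        rw [show a (a⁻¹ v) = v from a.apply_symm_apply v] at this
        exact this.symm
    intro v hv
    obtain ⟨g, hg, hgv⟩ := hc₁ v v₁
    have h := key g hg v
    rw [hgv] at h
    exact (h.mpr (fun hv' => absurd rfl hv')) hv
  have hall : ∀ x, reachAux G (Sum.inr ((τ i0).symm w₂)) x := by
    rintro (⟨v, hv⟩ | v)
    · exact h1 v hv
    · exact h2 v
  intro x y
  exact reachAux_trans (reachAux_symm (hall x)) (hall y)
end

section
/- Face count under gluing: let D ≥ 2 and let (V₁, W₁, σ) and (V₂, W₂, τ) be closed D-colored graphs with V₁, V₂ nonempty, v₁ : V₁ a white vertex and w₂ : W₂ a black vertex. Then for every pair of distinct colors i ≠ j, the number of (i,j)-faces of the glued graph satisfies F^{ij}(σ ⋆_{(v₁,w₂)} τ) = F^{ij}(σ) + F^{ij}(τ) − 1. -/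
open scoped BigOperators

variable {D N : ℕ}

/-- The orbit ("same cycle") setoid of a permutation. -/
def sameCycleSetoid {α : Type*} (e : Equiv.Perm α) : Setoid α :=
  ⟨e.SameCycle, ⟨fun x => Equiv.Perm.SameCycle.refl e x, fun h => h.symm, fun h h' => h.trans h'⟩⟩

/-- The number of orbits of a permutation. -/
noncomputable def permOrbitCount {α : Type*} (e : Equiv.Perm α) : ℕ :=
  Nat.card (Quotient (sameCycleSetoid e))

/-- The number of `(i,j)`-faces of a closed `D`-colored graph: the number of orbits on the
white vertices of the permutation `(σ i).trans (σ j).symm`. -/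
noncomputable def faceCount {V W : Type*} (σ : Fin D → V ≃ W) (i j : Fin D) : ℕ :=
  permOrbitCount ((σ i).trans (σ j).symm)

/-- The total number of faces `F(σ) = Σ_{i<j} F^{ij}(σ)`. -/
noncomputable def totalFaces {V W : Type*} (σ : Fin D → V ≃ W) : ℕ :=
  ∑ p ∈ Finset.univ.filter (fun p : Fin D × Fin D => p.1 < p.2), faceCount σ p.1 p.2

open Equiv Equiv.Perm

/-- Auxiliary relation describing same-cycle in the glued permutation. -/
def gRel {α β : Type*} (p : Equiv.Perm α) (q : Equiv.Perm β) (a : α) (b : β) :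
    ({x : α // x ≠ a} ⊕ β) → ({x : α // x ≠ a} ⊕ β) → Prop
  | Sum.inl x, Sum.inl y => p.SameCycle x.1 y.1
  | Sum.inl x, Sum.inr y => p.SameCycle x.1 a ∧ q.SameCycle y b
  | Sum.inr x, Sum.inl y => q.SameCycle x b ∧ p.SameCycle y.1 a
  | Sum.inr x, Sum.inr y => q.SameCycle x y

theorem abstract_count {α β : Type*} [Fintype α] [Fintype β]
    (p : Equiv.Perm α) (q : Equiv.Perm β) (a : α) (b : β)
    (g : Equiv.Perm ({x : α // x ≠ a} ⊕ β))
    (h1 : ∀ x (hx : x ≠ a), p x = a → g (Sum.inl ⟨x, hx⟩) = Sum.inr (q b))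
    (h2 : ∀ x (hx : x ≠ a) (h : p x ≠ a), g (Sum.inl ⟨x, hx⟩) = Sum.inl ⟨p x, h⟩)
    (h3 : ∀ y, y ≠ b → g (Sum.inr y) = Sum.inr (q y))
    (h4 : p a = a → g (Sum.inr b) = Sum.inr (q b))
    (h5 : ∀ h : p a ≠ a, g (Sum.inr b) = Sum.inl ⟨p a, h⟩) :
    Nat.card (Quotient (sameCycleSetoid g))
      = Nat.card (Quotient (sameCycleSetoid p)) + Nat.card (Quotient (sameCycleSetoid q)) - 1 := by
  classical
  set f₁ : α → ({x : α // x ≠ a} ⊕ β) :=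
    fun x => if hx : x = a then Sum.inr b else Sum.inl ⟨x, hx⟩ with hf₁
  have step : ∀ x : {x : α // x ≠ a} ⊕ β, g.SameCycle x (g x) := fun x => ⟨1, by simp⟩
  have hf₁ne : ∀ (x : α) (hx : x ≠ a), f₁ x = Sum.inl ⟨x, hx⟩ := fun x hx => dif_neg hx
  have hf₁a : f₁ a = Sum.inr b := dif_pos rfl
  -- the key "return to the right side" lemma
  have K : ∀ (n : ℕ) (x : α) (hx : x ≠ a), (p ^ n) (p x) = a →
      g.SameCycle (Sum.inl ⟨x, hx⟩) (Sum.inr (q b)) := by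
    intro n
    induction n with
    | zero =>
      intro x hx h
      simp only [pow_zero, Equiv.Perm.one_apply] at h
      rw [← h1 x hx h]; exact step _
    | succ n ih =>
      intro x hx h
      by_cases hpx : p x = a
      · rw [← h1 x hx hpx]; exact step _
      · have s := step (Sum.inl ⟨x, hx⟩)
        rw [h2 x hx hpx] at s
        exact s.trans (ih (p x) hpx (by rw [← Equiv.Perm.mul_apply, ← pow_succ]; exact h))
  have hb : g.SameCycle (Sum.inr b) (Sum.inr (q b)) := by
    by_cases hpa : p a = a
    · rw [← h4 hpa]; exact step _
    · have s1 := step (Sum.inr b)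
      rw [h5 hpa] at s1
      obtain ⟨m, hm⟩ : ∃ n, (p ^ n) (p (p a)) = a := by
        have hpos : 0 < orderOf p := orderOf_pos p
        refine ⟨orderOf p * 2 - 2, ?_⟩
        have h2o : orderOf p * 2 - 2 + 2 = orderOf p * 2 := by omega
        have hone : p ^ (orderOf p * 2) = 1 := by rw [pow_mul, pow_orderOf_eq_one, one_pow]
        calc (p ^ (orderOf p * 2 - 2)) (p (p a))
            = (p ^ (orderOf p * 2 - 2) * (p * p)) a := by
              simp [Equiv.Perm.mul_apply]
          _ = (p ^ (orderOf p * 2 - 2) * p ^ 2) a := by rw [pow_two]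
          _ = (p ^ (orderOf p * 2 - 2 + 2)) a := by rw [pow_add]
          _ = a := by rw [h2o, hone]; rfl
      exact s1.trans (K m (p a) hpa hm)
  have step2 : ∀ y : β, g.SameCycle (Sum.inr y) (Sum.inr (q y)) := by
    intro y
    by_cases hy : y = b
    · rw [hy]; exact hb
    · rw [← h3 y hy]; exact step _
  have step1 : ∀ x : α, g.SameCycle (f₁ x) (f₁ (p x)) := by
    intro x
    by_cases hx : x = a
    · rw [hx, hf₁a]
      by_cases hpa : p a = a
      · rw [hpa, hf₁a]
      · rw [hf₁ne _ hpa, ← h5 hpa]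
        exact step _
    · rw [hf₁ne x hx]
      by_cases hpx : p x = a
      · rw [hpx, hf₁a]
        have s1 := step (Sum.inl ⟨x, hx⟩)
        rw [h1 x hx hpx] at s1
        exact s1.trans (step2 b).symm
      · rw [hf₁ne _ hpx, ← h2 x hx hpx]
        exact step _
  have iter1 : ∀ (n : ℕ) (x : α), g.SameCycle (f₁ x) (f₁ ((p ^ n) x)) := by
    intro n
    induction n with
    | zero => intro x; simp only [pow_zero, Equiv.Perm.one_apply]; exact SameCycle.refl g _
    | succ n ih =>
      intro x
      have h' : (p ^ (n + 1)) x = p ((p ^ n) x) := by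
        rw [pow_succ', Equiv.Perm.mul_apply]
      rw [h']
      exact (ih x).trans (step1 _)
  have full1 : ∀ {x y : α}, p.SameCycle x y → g.SameCycle (f₁ x) (f₁ y) := by
    intro x y h
    obtain ⟨n, -, hn⟩ := h.exists_pow_eq'
    rw [← hn]; exact iter1 n x
  have iter2 : ∀ (n : ℕ) (y : β), g.SameCycle (Sum.inr y) (Sum.inr ((q ^ n) y)) := by
    intro n
    induction n with
    | zero => intro y; simp only [pow_zero, Equiv.Perm.one_apply]; exact SameCycle.refl g _
    | succ n ih =>
      intro y
      have h' : (q ^ (n + 1)) y = q ((q ^ n) y) := by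
        rw [pow_succ', Equiv.Perm.mul_apply]
      rw [h']
      exact (ih y).trans (step2 _)
  have full2 : ∀ {x y : β}, q.SameCycle x y → g.SameCycle (Sum.inr x) (Sum.inr y) := by
    intro x y h
    obtain ⟨n, -, hn⟩ := h.exists_pow_eq'
    rw [← hn]; exact iter2 n x
  -- backward direction via the invariant relation gRel
  have Rstep : ∀ u w, gRel p q a b u w → gRel p q a b u (g w) := by
    rintro u (⟨y, hy⟩ | y) h
    · by_cases hpy : p y = a
      · rw [h1 y hy hpy]
        cases u with
        | inl x =>
          exact ⟨h.trans ⟨1, by simpa using hpy⟩,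
            (sameCycle_apply_left).mpr (SameCycle.refl q b)⟩
        | inr x =>
          exact h.1.trans ((sameCycle_apply_right).mpr (SameCycle.refl q b))
      · rw [h2 y hy hpy]
        cases u with
        | inl x => exact h.trans ⟨1, by simp⟩
        | inr x => exact ⟨h.1, (sameCycle_apply_left).mpr h.2⟩
    · by_cases hyb : y = b
      · subst hyb
        by_cases hpa : p a = a
        · rw [h4 hpa]
          cases u with
          | inl x => exact ⟨h.1, (sameCycle_apply_left).mpr h.2⟩
          | inr x => exact (sameCycle_apply_right).mpr h
        · rw [h5 hpa]
          cases u with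
          | inl x => exact h.1.trans ⟨1, by simp⟩
          | inr x => exact ⟨h, (sameCycle_apply_left).mpr (SameCycle.refl p a)⟩
      · rw [h3 y hyb]
        cases u with
        | inl x => exact ⟨h.1, (sameCycle_apply_left).mpr h.2⟩
        | inr x => exact (sameCycle_apply_right).mpr h
  have Rrefl : ∀ u, gRel p q a b u u := by
    rintro (x | y)
    · exact SameCycle.refl p x.1
    · exact SameCycle.refl q y
  have Riter : ∀ (n : ℕ) (u), gRel p q a b u ((g ^ n) u) := by
    intro n
    induction n with
    | zero => intro u; simpa using Rrefl u
    | succ n ih =>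
      intro u
      have h' : (g ^ (n + 1)) u = g ((g ^ n) u) := by
        rw [pow_succ', Equiv.Perm.mul_apply]
      rw [h']
      exact Rstep _ _ (ih u)
  have Rback : ∀ {u w}, g.SameCycle u w → gRel p q a b u w := by
    intro u w h
    obtain ⟨n, -, hn⟩ := h.exists_pow_eq'
    rw [← hn]; exact Riter n u
  -- set up the counting
  set Q1 := Quotient (sameCycleSetoid p) with hQ1
  set Q2 := Quotient (sameCycleSetoid q) with hQ2
  set Q := Quotient (sameCycleSetoid g) with hQ
  let φ : Q1 ⊕ Q2 → Q := Sum.elim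
    (Quotient.lift (fun x => Quotient.mk (sameCycleSetoid g) (f₁ x))
      (fun x y h => Quotient.sound (full1 h)))
    (Quotient.lift (fun y => Quotient.mk (sameCycleSetoid g) (Sum.inr y))
      (fun x y h => Quotient.sound (full2 h)))
  set A : Q1 ⊕ Q2 := Sum.inl (Quotient.mk (sameCycleSetoid p) a) with hA
  have hsurj : ∀ c : Q, ∃ d : Q1 ⊕ Q2, d ≠ A ∧ φ d = c := by
    intro c
    obtain ⟨u, rfl⟩ := Quotient.exists_rep c
    rcases u with ⟨x, hx⟩ | y
    · by_cases hxa : p.SameCycle x a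
      · refine ⟨Sum.inr (Quotient.mk (sameCycleSetoid q) b), by simp [hA], ?_⟩
        show Quotient.mk (sameCycleSetoid g) (Sum.inr b) = _
        refine Quotient.sound ?_
        have := full1 hxa.symm
        rwa [hf₁a, hf₁ne x hx] at this
      · refine ⟨Sum.inl (Quotient.mk (sameCycleSetoid p) x), ?_, ?_⟩
        · intro h
          rw [hA] at h
          exact hxa (Quotient.exact (Sum.inl.inj h))
        · show Quotient.mk (sameCycleSetoid g) (f₁ x) = _
          rw [hf₁ne x hx]
    · exact ⟨Sum.inr (Quotient.mk (sameCycleSetoid q) y), by simp [hA], rfl⟩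
  have L1 : ∀ u u' : α, gRel p q a b (f₁ u) (f₁ u') → p.SameCycle u u' := by
    intro u u' h
    by_cases hu : u = a <;> by_cases hu' : u' = a
    · rw [hu, hu']
    · rw [hu] at h ⊢
      rw [hf₁a, hf₁ne u' hu'] at h
      exact h.2.symm
    · rw [hu'] at h ⊢
      rw [hf₁a, hf₁ne u hu] at h
      exact h.1
    · rw [hf₁ne u hu, hf₁ne u' hu'] at h
      exact h
  have hinj : ∀ d d' : Q1 ⊕ Q2, d ≠ A → d' ≠ A → φ d = φ d' → d = d' := by
    rintro (x | y) (x' | y') hd hd' h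
    · obtain ⟨u, rfl⟩ := Quotient.exists_rep x
      obtain ⟨u', rfl⟩ := Quotient.exists_rep x'
      have hsc : g.SameCycle (f₁ u) (f₁ u') := Quotient.exact h
      exact congrArg Sum.inl (Quotient.sound (L1 u u' (Rback hsc)))
    · obtain ⟨u, rfl⟩ := Quotient.exists_rep x
      obtain ⟨y, rfl⟩ := Quotient.exists_rep y'
      exfalso
      have hsc : g.SameCycle (f₁ u) (Sum.inr y) := Quotient.exact h
      have hR := Rback hsc
      by_cases hu : u = a
      · exact hd (by rw [hA, hu])
      · rw [hf₁ne u hu] at hR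
        exact hd (by rw [hA]; exact congrArg Sum.inl (Quotient.sound hR.1))
    · obtain ⟨y, rfl⟩ := Quotient.exists_rep y
      obtain ⟨u, rfl⟩ := Quotient.exists_rep x'
      exfalso
      have hsc : g.SameCycle (Sum.inr y) (f₁ u) := Quotient.exact h
      have hR := Rback hsc
      by_cases hu : u = a
      · exact hd' (by rw [hA, hu])
      · rw [hf₁ne u hu] at hR
        exact hd' (by rw [hA]; exact congrArg Sum.inl (Quotient.sound hR.2))
    · obtain ⟨u, rfl⟩ := Quotient.exists_rep y
      obtain ⟨u', rfl⟩ := Quotient.exists_rep y'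
      have hsc : g.SameCycle (Sum.inr u) (Sum.inr u') := Quotient.exact h
      exact congrArg Sum.inr (Quotient.sound (Rback hsc))
  -- the bijection
  let ψ : {d : Q1 ⊕ Q2 // d ≠ A} → Q := fun d => φ d.1
  have hbij : Function.Bijective ψ := by
    constructor
    · rintro ⟨d, hdA⟩ ⟨d', hdA'⟩ h
      exact Subtype.ext (hinj d d' hdA hdA' h)
    · intro c
      obtain ⟨d, hdA, hφ⟩ := hsurj c
      exact ⟨⟨d, hdA⟩, hφ⟩
  have hcount : Nat.card {d : Q1 ⊕ Q2 // d ≠ A} = Nat.card Q := Nat.card_eq_of_bijective ψ hbij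
  have hone : Nat.card {d : Q1 ⊕ Q2 // d = A} = 1 := by
    rw [Nat.card_eq_one_iff_unique]
    exact ⟨⟨fun x y => Subtype.ext (x.2.trans y.2.symm)⟩, ⟨⟨A, rfl⟩⟩⟩
  have hsplit : Nat.card (Q1 ⊕ Q2) =
      Nat.card {d : Q1 ⊕ Q2 // d = A} + Nat.card {d : Q1 ⊕ Q2 // d ≠ A} := by
    rw [← Nat.card_sum]
    exact Nat.card_congr (Equiv.sumCompl (fun d => d = A)).symm
  have hsum : Nat.card (Q1 ⊕ Q2) = Nat.card Q1 + Nat.card Q2 := Nat.card_sum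
  omega


section mainthm

variable {D : ℕ} {V₁ W₁ V₂ W₂ : Type*}

theorem glue_apply_inl (σ : Fin D → V₁ ≃ W₁) (τ : Fin D → V₂ ≃ W₂) (v₁ : V₁) (w₂ : W₂)
    (i : Fin D) (z : {v : V₁ // v ≠ v₁}) :
    (glue σ τ v₁ w₂ i) (Sum.inl z) = Sum.inl (σ i z.1) := rfl

open Classical in
theorem glue_apply_inr (σ : Fin D → V₁ ≃ W₁) (τ : Fin D → V₂ ≃ W₂) (v₁ : V₁) (w₂ : W₂)
    (i : Fin D) (u : V₂) :
    (glue σ τ v₁ w₂ i) (Sum.inr u)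
      = if h : τ i u = w₂ then Sum.inl (σ i v₁) else Sum.inr ⟨τ i u, h⟩ := rfl

open Classical in
theorem glue_symm_inl (σ : Fin D → V₁ ≃ W₁) (τ : Fin D → V₂ ≃ W₂) (v₁ : V₁) (w₂ : W₂)
    (i : Fin D) (w : W₁) :
    (glue σ τ v₁ w₂ i).symm (Sum.inl w)
      = if h : (σ i).symm w = v₁ then Sum.inr ((τ i).symm w₂)
        else Sum.inl ⟨(σ i).symm w, h⟩ := rfl

theorem glue_symm_inr (σ : Fin D → V₁ ≃ W₁) (τ : Fin D → V₂ ≃ W₂) (v₁ : V₁) (w₂ : W₂)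
    (i : Fin D) (w : {w : W₂ // w ≠ w₂}) :
    (glue σ τ v₁ w₂ i).symm (Sum.inr w) = Sum.inr ((τ i).symm w.1) := rfl

end mainthm

/-- Face count under gluing:
`F^{ij}(σ ⋆_{(v₁,w₂)} τ) = F^{ij}(σ) + F^{ij}(τ) − 1` for distinct colors `i ≠ j`. -/
theorem glue_faceCount {D : ℕ} (hD : 2 ≤ D) {V₁ W₁ V₂ W₂ : Type*}
    [Fintype V₁] [Fintype W₁] [Fintype V₂] [Fintype W₂]
    (hne₁ : Nonempty V₁) (hne₂ : Nonempty V₂)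
    (σ : Fin D → V₁ ≃ W₁) (τ : Fin D → V₂ ≃ W₂) (v₁ : V₁) (w₂ : W₂)
    {i j : Fin D} (hij : i ≠ j) :
    faceCount (glue σ τ v₁ w₂) i j = faceCount σ i j + faceCount τ i j - 1 := by
  classical
  have hqb : ((τ i).trans (τ j).symm) ((τ i).symm w₂) = (τ j).symm w₂ := by
    simp
  have main := abstract_count ((σ i).trans (σ j).symm) ((τ i).trans (τ j).symm)
      v₁ ((τ i).symm w₂) ((glue σ τ v₁ w₂ i).trans (glue σ τ v₁ w₂ j).symm)
      ?_ ?_ ?_ ?_ ?_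
  · simpa [faceCount, permOrbitCount] using main
  · -- h1
    intro x hx hpx
    have hc : (σ j).symm (σ i x) = v₁ := hpx
    rw [Equiv.trans_apply, glue_apply_inl, glue_symm_inl, dif_pos hc, hqb]
  · -- h2
    intro x hx h
    have hc : ¬ (σ j).symm (σ i x) = v₁ := h
    rw [Equiv.trans_apply, glue_apply_inl, glue_symm_inl, dif_neg hc]
    rfl
  · -- h3
    intro y hy
    have hy' : ¬ τ i y = w₂ := fun h => hy (by rw [← h, Equiv.symm_apply_apply])
    rw [Equiv.trans_apply, glue_apply_inr, dif_neg hy', glue_symm_inr]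
    rfl
  · -- h4
    intro hpa
    have hc : τ i ((τ i).symm w₂) = w₂ := by simp
    have hc2 : (σ j).symm (σ i v₁) = v₁ := hpa
    rw [Equiv.trans_apply, glue_apply_inr, dif_pos hc, glue_symm_inl, dif_pos hc2, hqb]
  · -- h5
    intro hpa
    have hc : τ i ((τ i).symm w₂) = w₂ := by simp
    have hc2 : ¬ (σ j).symm (σ i v₁) = v₁ := hpa
    rw [Equiv.trans_apply, glue_apply_inr, dif_pos hc, glue_symm_inl, dif_neg hc2]
    rfl
end

section
/- Additivity of the degree under gluing: let D ≥ 2 and let (V₁, W₁, σ) and (V₂, W₂, τ) be closed D-colored graphs with V₁, V₂ nonempty, v₁ : V₁ a white vertex and w₂ : W₂ a black vertex. Then ω(σ ⋆_{(v₁,w₂)} τ) = ω(σ) + ω(τ). -/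
open scoped BigOperators

variable {D N : ℕ}

/-- The degree `ω(σ) = ((D-2)!/2) ((D-1)(D-2) k/2 + (D-1) - F(σ))` of a closed
`D`-colored graph with `k` white (and `k` black) vertices. -/
noncomputable def graphDegree {V W : Type*} (σ : Fin D → V ≃ W) : ℚ :=
  (Nat.factorial (D - 2) : ℚ) / 2 *
    (((D : ℚ) - 1) * ((D : ℚ) - 2) * (Nat.card V) / 2 + ((D : ℚ) - 1) - totalFaces σ)


section AuxSplice

open Equiv Equiv.Perm

private lemma sameCycle_of_pow {γ : Type*} {e : Equiv.Perm γ} {x y : γ} {n : ℕ}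
    (h : (e ^ n) x = y) : e.SameCycle x y :=
  ⟨(n : ℤ), by rwa [zpow_natCast]⟩

private lemma card_ne_add_one {γ : Type*} [Finite γ] (x : γ) :
    Nat.card {y : γ // y ≠ x} + 1 = Nat.card γ := by
  classical
  have h1 : Nat.card γ = Nat.card ({y : γ // y = x} ⊕ {y : γ // ¬ y = x}) :=
    Nat.card_congr (Equiv.sumCompl (fun y : γ => y = x)).symm
  have h2 : Nat.card {y : γ // y = x} = 1 := by
    rw [Nat.card_eq_one_iff_unique]
    exact ⟨⟨fun ⟨y, hy⟩ ⟨z, hz⟩ => Subtype.ext (hy.trans hz.symm)⟩, ⟨⟨x, rfl⟩⟩⟩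
  rw [h1, Nat.card_sum, h2, add_comm]

open Classical in
private lemma splice_orbitCount {α β : Type*} [Finite α] [Finite β]
    (π₁ : Equiv.Perm α) (π₂ : Equiv.Perm β) (a : α) (b : β)
    (g : Equiv.Perm ({x : α // x ≠ a} ⊕ β))
    (hgl : ∀ (x : α) (hx : x ≠ a), g (Sum.inl ⟨x, hx⟩) =
      if h : π₁ x = a then Sum.inr (π₂ b) else Sum.inl ⟨π₁ x, h⟩)
    (hgr : ∀ y : β, g (Sum.inr y) =
      if hy : y = b then
        (if h : π₁ a = a then Sum.inr (π₂ b) else Sum.inl ⟨π₁ a, h⟩)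
      else Sum.inr (π₂ y)) :
    permOrbitCount g + 1 = permOrbitCount π₁ + permOrbitCount π₂ := by
  classical
  have A1 : ∀ (n : ℕ) (x : α) (hx : x ≠ a) (h : ∀ k, k ≤ n → (π₁ ^ k) x ≠ a),
      (g ^ n) (Sum.inl ⟨x, hx⟩) = Sum.inl ⟨(π₁ ^ n) x, h n le_rfl⟩ := by
    intro n
    induction n with
    | zero =>
      intro x hx h
      exact congrArg Sum.inl (Subtype.ext (by simp))
    | succ n ih =>
      intro x hx h
      have hx1 : π₁ x ≠ a := by simpa using h 1 (by omega)
      have hk : ∀ k, k ≤ n → (π₁ ^ k) (π₁ x) ≠ a := by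
        intro k hk
        have := h (k + 1) (by omega)
        rwa [pow_succ, Equiv.Perm.mul_apply] at this
      rw [pow_succ, Equiv.Perm.mul_apply, hgl x hx, dif_neg hx1, ih (π₁ x) hx1 hk]
      exact congrArg Sum.inl (Subtype.ext
        (show (π₁ ^ n) (π₁ x) = (π₁ ^ (n + 1)) x by rw [pow_succ, Equiv.Perm.mul_apply]))
  have A2 : ∀ (m : ℕ) (x : α) (hx : x ≠ a), (∀ k, k ≤ m → (π₁ ^ k) x ≠ a) →
      (π₁ ^ (m + 1)) x = a → (g ^ (m + 1)) (Sum.inl ⟨x, hx⟩) = Sum.inr (π₂ b) := by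
    intro m x hx h hm
    rw [pow_succ', Equiv.Perm.mul_apply, A1 m x hx h, hgl,
      dif_pos (show π₁ ((π₁ ^ m) x) = a by
        rw [← Equiv.Perm.mul_apply, ← pow_succ']; exact hm)]
  have S2 : ∀ (x : α) (hx : x ≠ a), π₁.SameCycle x a →
      g.SameCycle (Sum.inl ⟨x, hx⟩) (Sum.inr (π₂ b)) := by
    intro x hx hxa
    obtain ⟨i, -, hi⟩ := hxa.exists_pow_eq'
    have hP : ∃ n, (π₁ ^ n) x = a := ⟨i, hi⟩
    have hn0 : Nat.find hP ≠ 0 := by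
      intro h0
      have := Nat.find_spec hP
      rw [h0, pow_zero] at this
      exact hx (by simpa using this)
    obtain ⟨m, hm⟩ := Nat.exists_eq_succ_of_ne_zero hn0
    have hna : (π₁ ^ (m + 1)) x = a := by
      have h' := Nat.find_spec hP
      rw [hm] at h'
      exact h'
    have hmin : ∀ k, k ≤ m → (π₁ ^ k) x ≠ a := fun k hk => Nat.find_min hP (by omega)
    exact sameCycle_of_pow (A2 m x hx hmin hna)
  have S3 : g.SameCycle (Sum.inr b) (Sum.inr (π₂ b)) := by
    by_cases hπa : π₁ a = a
    · exact sameCycle_of_pow (n := 1) (by rw [pow_one, hgr b, dif_pos rfl, dif_pos hπa])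
    · have hP : ∃ n, 0 < n ∧ (π₁ ^ n) a = a :=
        ⟨orderOf π₁, orderOf_pos π₁, by rw [pow_orderOf_eq_one]; rfl⟩
      obtain ⟨hn0, hna⟩ := Nat.find_spec hP
      have hmin : ∀ k, 0 < k → k < Nat.find hP → (π₁ ^ k) a ≠ a :=
        fun k hk0 hkn hk => Nat.find_min hP hkn ⟨hk0, hk⟩
      have h2 : 2 ≤ Nat.find hP := by
        by_contra h'
        have h1 : Nat.find hP = 1 := by omega
        rw [h1, pow_one] at hna
        exact hπa hna
      obtain ⟨m, hm⟩ : ∃ m, Nat.find hP = m + 2 := ⟨Nat.find hP - 2, by omega⟩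
      refine sameCycle_of_pow (n := Nat.find hP) ?_
      rw [hm, pow_succ, Equiv.Perm.mul_apply, hgr b, dif_pos rfl, dif_neg hπa]
      refine A2 m (π₁ a) hπa ?_ ?_
      · intro k hk hc
        exact hmin (k + 1) (by omega) (by omega)
          (by rw [pow_succ, Equiv.Perm.mul_apply]; exact hc)
      · have hna2 : (π₁ ^ (m + 2)) a = a := by rw [← hm]; exact hna
        rw [show m + 2 = (m + 1) + 1 from rfl, pow_succ, Equiv.Perm.mul_apply] at hna2
        exact hna2
  have S1 : ∀ (x x' : α) (hx : x ≠ a) (hx' : x' ≠ a), ¬π₁.SameCycle a x →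
      π₁.SameCycle x x' → g.SameCycle (Sum.inl ⟨x, hx⟩) (Sum.inl ⟨x', hx'⟩) := by
    intro x x' hx hx' hax hxx
    obtain ⟨n, -, hn⟩ := hxx.exists_pow_eq'
    have hk : ∀ k, k ≤ n → (π₁ ^ k) x ≠ a := by
      intro k _ hka
      exact hax (sameCycle_of_pow hka).symm
    refine sameCycle_of_pow (n := n) ?_
    rw [A1 n x hx hk]
    exact congrArg Sum.inl (Subtype.ext hn)
  have S4 : ∀ (y y' : β), π₂.SameCycle y y' →
      g.SameCycle (Sum.inr y) (Sum.inr y') := by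
    have step : ∀ y : β, g.SameCycle (Sum.inr y) (Sum.inr (π₂ y)) := by
      intro y
      by_cases hy : y = b
      · subst hy; exact S3
      · exact sameCycle_of_pow (n := 1) (by rw [pow_one, hgr y, dif_neg hy])
    have iter : ∀ (n : ℕ) (y : β), g.SameCycle (Sum.inr y) (Sum.inr ((π₂ ^ n) y)) := by
      intro n
      induction n with
      | zero => intro y; simpa using Equiv.Perm.SameCycle.refl g (Sum.inr y)
      | succ n ih =>
        intro y
        have := (ih y).trans (step ((π₂ ^ n) y))
        rwa [← Equiv.Perm.mul_apply, ← pow_succ'] at this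
    intro y y' h
    obtain ⟨n, -, hn⟩ := h.exists_pow_eq'
    rw [← hn]
    exact iter n y
  -- the comparison map on orbit spaces
  let q1 : α → Quotient (sameCycleSetoid π₁) := Quotient.mk _
  let q2 : β → Quotient (sameCycleSetoid π₂) := Quotient.mk _
  let f₀ : ({x : α // x ≠ a} ⊕ β) →
      ({c : Quotient (sameCycleSetoid π₁) // c ≠ q1 a} ⊕ Quotient (sameCycleSetoid π₂)) :=
    fun z => Sum.rec
      (fun x => if h : π₁.SameCycle a x.1 then Sum.inr (q2 b)
        else Sum.inl ⟨q1 x.1, fun he => h (Equiv.Perm.SameCycle.symm (@Quotient.exact _ (sameCycleSetoid π₁) _ _ he))⟩)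
      (fun y => Sum.inr (q2 y)) z
  have f₀l : ∀ (x : α) (hx : x ≠ a), f₀ (Sum.inl ⟨x, hx⟩) =
      if h : π₁.SameCycle a x then Sum.inr (q2 b)
      else Sum.inl ⟨q1 x, fun he => h (Equiv.Perm.SameCycle.symm (@Quotient.exact _ (sameCycleSetoid π₁) _ _ he))⟩ :=
    fun _ _ => rfl
  have f₀r : ∀ y : β, f₀ (Sum.inr y) = Sum.inr (q2 y) := fun _ => rfl
  have hsc1 : ∀ x : α, π₁.SameCycle x (π₁ x) :=
    fun x => sameCycle_of_pow (n := 1) (by rw [pow_one])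
  have hsc2 : ∀ y : β, π₂.SameCycle y (π₂ y) :=
    fun y => sameCycle_of_pow (n := 1) (by rw [pow_one])
  have hq1 : ∀ x : α, q1 (π₁ x) = q1 x := fun x => Quotient.sound (hsc1 x).symm
  have hq2 : ∀ y : β, q2 (π₂ y) = q2 y := fun y => Quotient.sound (hsc2 y).symm
  have key_step : ∀ z, f₀ (g z) = f₀ z := by
    rintro (⟨x, hx⟩ | y)
    · rw [hgl x hx]
      by_cases h : π₁ x = a
      · rw [dif_pos h, f₀r, f₀l]
        have h1 : π₁.SameCycle a x := (sameCycle_of_pow (n := 1) (by rwa [pow_one])).symm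
        rw [dif_pos h1]
        exact congrArg Sum.inr (hq2 b)
      · rw [dif_neg h, f₀l, f₀l]
        by_cases h2 : π₁.SameCycle a x
        · rw [dif_pos h2, dif_pos (h2.trans (hsc1 x))]
        · rw [dif_neg h2, dif_neg (fun hc => h2 (hc.trans (hsc1 x).symm))]
          exact congrArg Sum.inl (Subtype.ext (hq1 x))
    · rw [hgr y]
      by_cases hy : y = b
      · rw [dif_pos hy]
        by_cases hπa : π₁ a = a
        · rw [dif_pos hπa, f₀r, f₀r, hq2 b, hy]
        · rw [dif_neg hπa, f₀l, f₀r, dif_pos (hsc1 a), hy]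
      · rw [dif_neg hy, f₀r, f₀r, hq2 y]
  have key_iter : ∀ (n : ℕ) (z), f₀ ((g ^ n) z) = f₀ z := by
    intro n
    induction n with
    | zero => intro z; rw [pow_zero]; rfl
    | succ n ih => intro z; rw [pow_succ', Equiv.Perm.mul_apply, key_step, ih]
  have hresp : ∀ z z', (sameCycleSetoid g).r z z' → f₀ z = f₀ z' := by
    intro z z' h
    obtain ⟨n, -, hn⟩ := (show g.SameCycle z z' from h).exists_pow_eq'
    rw [← hn, key_iter]
  let f := Quotient.lift f₀ hresp
  have hinj : Function.Injective f := by
    intro c c'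
    refine Quotient.inductionOn₂ c c' ?_
    intro z z' h
    have h' : f₀ z = f₀ z' := h
    refine Quotient.sound ?_
    show g.SameCycle z z'
    obtain (⟨x, hx⟩ | y) := z <;> obtain (⟨x', hx'⟩ | y') := z'
    · rw [f₀l, f₀l] at h'
      by_cases h1 : π₁.SameCycle a x <;> by_cases h2 : π₁.SameCycle a x'
      · exact (S2 x hx h1.symm).trans (S2 x' hx' h2.symm).symm
      · rw [dif_pos h1, dif_neg h2] at h'; exact absurd h' (by simp)
      · rw [dif_neg h1, dif_pos h2] at h'; exact absurd h' (by simp)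
      · rw [dif_neg h1, dif_neg h2] at h'
        simp only [Sum.inl.injEq, Subtype.mk.injEq] at h'
        exact S1 x x' hx hx' h1 (@Quotient.exact _ (sameCycleSetoid π₁) _ _ h')
    · rw [f₀l, f₀r] at h'
      by_cases h1 : π₁.SameCycle a x
      · rw [dif_pos h1] at h'
        simp only [Sum.inr.injEq] at h'
        have hby : π₂.SameCycle b y' := @Quotient.exact _ (sameCycleSetoid π₂) _ _ h'
        exact ((S2 x hx h1.symm).trans S3.symm).trans (S4 b y' hby)
      · rw [dif_neg h1] at h'; exact absurd h' (by simp)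
    · rw [f₀r, f₀l] at h'
      by_cases h1 : π₁.SameCycle a x'
      · rw [dif_pos h1] at h'
        simp only [Sum.inr.injEq] at h'
        have hby : π₂.SameCycle b y := Equiv.Perm.SameCycle.symm (@Quotient.exact _ (sameCycleSetoid π₂) _ _ h')
        exact (((S2 x' hx' h1.symm).trans S3.symm).trans (S4 b y hby)).symm
      · rw [dif_neg h1] at h'; exact absurd h' (by simp)
    · rw [f₀r, f₀r] at h'
      simp only [Sum.inr.injEq] at h'
      exact S4 y y' (@Quotient.exact _ (sameCycleSetoid π₂) _ _ h')
  have hsurj : Function.Surjective f := by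
    rintro (⟨c, hc⟩ | c)
    · obtain ⟨x, rfl⟩ := Quotient.exists_rep c
      have hax : ¬ π₁.SameCycle a x := fun h => hc (Quotient.sound h.symm)
      have hxa : x ≠ a := by
        rintro rfl
        exact hax (Equiv.Perm.SameCycle.refl _ _)
      refine ⟨Quotient.mk _ (Sum.inl ⟨x, hxa⟩), ?_⟩
      show f₀ (Sum.inl ⟨x, hxa⟩) = _
      rw [f₀l, dif_neg hax]
    · obtain ⟨y, rfl⟩ := Quotient.exists_rep c
      exact ⟨Quotient.mk _ (Sum.inr y), rfl⟩
  have hcard := Nat.card_eq_of_bijective f ⟨hinj, hsurj⟩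
  have hne := card_ne_add_one (q1 a)
  rw [permOrbitCount, permOrbitCount, permOrbitCount, hcard, Nat.card_sum]
  omega

end AuxSplice

/-- Additivity of the degree under the colored gluing:
`ω(σ ⋆_{(v₁,w₂)} τ) = ω(σ) + ω(τ)`. -/
theorem glue_degree {D : ℕ} (hD : 2 ≤ D) {V₁ W₁ V₂ W₂ : Type*}
    [Fintype V₁] [Fintype W₁] [Fintype V₂] [Fintype W₂]
    (hne₁ : Nonempty V₁) (hne₂ : Nonempty V₂)
    (σ : Fin D → V₁ ≃ W₁) (τ : Fin D → V₂ ≃ W₂) (v₁ : V₁) (w₂ : W₂) :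
    graphDegree (glue σ τ v₁ w₂) = graphDegree σ + graphDegree τ := by
  classical
  have key : ∀ i j : Fin D,
      faceCount (glue σ τ v₁ w₂) i j + 1 = faceCount σ i j + faceCount τ i j := by
    intro i j
    refine splice_orbitCount ((σ i).trans (σ j).symm) ((τ i).trans (τ j).symm) v₁
      ((τ i).symm w₂) ((glue σ τ v₁ w₂ i).trans ((glue σ τ v₁ w₂ j)).symm) ?_ ?_
    · intro v hv
      simp only [Equiv.trans_apply, glue, Equiv.coe_fn_mk, Equiv.coe_fn_symm_mk,
        Sum.elim_inl, Equiv.apply_symm_apply]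
      try split_ifs with h <;> rfl
    · intro v
      by_cases hv : τ i v = w₂
      · have hvb : v = (τ i).symm w₂ := by rw [← hv, Equiv.symm_apply_apply]
        rw [dif_pos hvb]
        simp only [Equiv.trans_apply, glue, Equiv.coe_fn_mk, Equiv.coe_fn_symm_mk,
          Sum.elim_inr, Equiv.apply_symm_apply]
        rw [dif_pos hv]
        simp only [Sum.elim_inl]
        try split_ifs with h <;> rfl
      · have hvb : v ≠ (τ i).symm w₂ := fun hc => hv (by rw [hc, Equiv.apply_symm_apply])
        rw [dif_neg hvb]
        simp only [Equiv.trans_apply, glue, Equiv.coe_fn_mk, Equiv.coe_fn_symm_mk,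
          Sum.elim_inr]
        rw [dif_neg hv]
        rfl
  set P := Finset.univ.filter (fun p : Fin D × Fin D => p.1 < p.2) with hPdef
  have hsum : totalFaces (glue σ τ v₁ w₂) + P.card = totalFaces σ + totalFaces τ := by
    simp only [totalFaces, ← hPdef]
    have h1 : ∑ p ∈ P, (faceCount (glue σ τ v₁ w₂) p.1 p.2 + 1)
        = ∑ p ∈ P, (faceCount σ p.1 p.2 + faceCount τ p.1 p.2) :=
      Finset.sum_congr rfl (fun p _ => key p.1 p.2)
    rw [Finset.sum_add_distrib, Finset.sum_const, smul_eq_mul, mul_one,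
      Finset.sum_add_distrib] at h1
    exact h1
  have hcard2 : 2 * P.card = D * (D - 1) := by
    have inner : ∀ y : Fin D, (∑ x : Fin D, if x < y then 1 else 0) = (y : ℕ) := by
      intro y
      rw [← Finset.card_filter]
      have h2 : Finset.univ.filter (fun x : Fin D => x < y) = Finset.Iio y := by
        ext x; simp
      rw [h2, Fin.card_Iio]
    rw [hPdef, Finset.card_filter, Fintype.sum_prod_type_right]
    rw [Finset.sum_congr rfl (fun y _ => inner y), Fin.sum_univ_eq_sum_range (fun i => i) D]
    rw [mul_comm]
    exact Finset.sum_range_id_mul_two D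
  have hk1 : Nat.card {v : V₁ // v ≠ v₁} + 1 = Nat.card V₁ := card_ne_add_one v₁
  have hNV : Nat.card ({v : V₁ // v ≠ v₁} ⊕ V₂)
      = Nat.card {v : V₁ // v ≠ v₁} + Nat.card V₂ := Nat.card_sum
  have hFq : (totalFaces (glue σ τ v₁ w₂) : ℚ) + P.card = totalFaces σ + totalFaces τ := by
    exact_mod_cast congrArg (Nat.cast : ℕ → ℚ) hsum
  have hk1q : (Nat.card {v : V₁ // v ≠ v₁} : ℚ) + 1 = Nat.card V₁ := by
    exact_mod_cast congrArg (Nat.cast : ℕ → ℚ) hk1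
  have hPq : 2 * (P.card : ℚ) = D * ((D : ℚ) - 1) := by
    have h := congrArg (Nat.cast : ℕ → ℚ) hcard2
    push_cast [Nat.cast_sub (by omega : 1 ≤ D)] at h
    exact h
  rw [graphDegree, graphDegree, graphDegree, hNV]
  push_cast
  linear_combination (((Nat.factorial (D - 2) : ℚ) / 2) * (((D : ℚ) - 1) * ((D : ℚ) - 2)) / 2) * hk1q
    - ((Nat.factorial (D - 2) : ℚ) / 2) * hFq
    + (((Nat.factorial (D - 2) : ℚ) / 2) / 2) * hPq
end

section
/- Melonic graphs are closed under colored gluing: let D ≥ 2 and let (V₁, W₁, σ) and (V₂, W₂, τ) be closed D-colored graphs with V₁, V₂ nonempty, v₁ : V₁ a white vertex and w₂ : W₂ a black vertex. If ω(σ) = 0 and ω(τ) = 0 (i.e. both graphs are melonic, meaning of degree zero), then ω(σ ⋆_{(v₁,w₂)} τ) = 0. -/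
open scoped BigOperators

variable {D N : ℕ}

section Splice

open Equiv Equiv.Perm Sum

variable {α β : Type*}

private lemma sc_self_apply {γ : Type*} (p : Equiv.Perm γ) (x : γ) : p.SameCycle x (p x) :=
  Equiv.Perm.sameCycle_apply_right.mpr (Equiv.Perm.SameCycle.refl p x)

private lemma sc_of_eq {e : Equiv.Perm α} {a b : α} (h : a = b) : e.SameCycle a b :=
  ⟨0, by simp [h]⟩

private lemma sc_pow (e : Equiv.Perm α) (n : ℕ) (a : α) : e.SameCycle a ((e ^ n) a) :=
  ⟨(n : ℤ), by simp⟩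

private lemma ne_of_not_sc {e : Equiv.Perm α} {a₀ : α} {a : α} (h : ¬ e.SameCycle a a₀) :
    a ≠ a₀ := fun ha => h (sc_of_eq ha)

variable (e : Equiv.Perm α) (f : Equiv.Perm β) (a₀ : α) (b₀ : β)
  (p : Equiv.Perm ({a : α // a ≠ a₀} ⊕ β))

/-- The splice hypotheses. -/
private structure SpliceHyp : Prop where
  h1 : ∀ (a : α) (h : a ≠ a₀), e a = a₀ → p (Sum.inl ⟨a, h⟩) = Sum.inr (f b₀)
  h2 : ∀ (a : α) (h : a ≠ a₀) (h' : e a ≠ a₀), p (Sum.inl ⟨a, h⟩) = Sum.inl ⟨e a, h'⟩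
  h3 : ∀ b : β, b ≠ b₀ → p (Sum.inr b) = Sum.inr (f b)
  h4 : e a₀ = a₀ → p (Sum.inr b₀) = Sum.inr (f b₀)
  h5 : ∀ h' : e a₀ ≠ a₀, p (Sum.inr b₀) = Sum.inl ⟨e a₀, h'⟩

variable {e f a₀ b₀ p}

private lemma scC (H : SpliceHyp e f a₀ b₀ p) :
    ∀ (n : ℕ) (a : α) (h : a ≠ a₀), (e ^ n) a = a₀ →
      p.SameCycle (Sum.inl ⟨a, h⟩) (Sum.inr (f b₀)) := by
  intro n
  induction n with
  | zero => intro a h ha; exact absurd (by simpa using ha) h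
  | succ n ih =>
    intro a h ha
    by_cases he : e a = a₀
    · rw [← H.h1 a h he]; exact sc_self_apply p _
    · have ha' : (e ^ n) (e a) = a₀ := by
        rw [← Equiv.Perm.mul_apply, ← pow_succ]; exact ha
      have step : p.SameCycle (Sum.inl ⟨a, h⟩) (Sum.inl ⟨e a, he⟩) := by
        rw [← H.h2 a h he]; exact sc_self_apply p _
      exact step.trans (ih (e a) he ha')

private lemma scHb [Finite α] (H : SpliceHyp e f a₀ b₀ p) :
    p.SameCycle (Sum.inr b₀) (Sum.inr (f b₀)) := by
  by_cases he : e a₀ = a₀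
  · rw [← H.h4 he]; exact sc_self_apply p _
  · have : Finite (Equiv.Perm α) := by infer_instance
    obtain ⟨m, hm⟩ : ∃ m, orderOf e = m + 1 :=
      ⟨orderOf e - 1, by have := orderOf_pos e; omega⟩
    have hpow : (e ^ m) (e a₀) = a₀ := by
      rw [← Equiv.Perm.mul_apply, ← pow_succ, ← hm, pow_orderOf_eq_one]; rfl
    have step : p.SameCycle (Sum.inr b₀) (Sum.inl ⟨e a₀, he⟩) := by
      rw [← H.h5 he]; exact sc_self_apply p _
    exact step.trans (scC H m (e a₀) he hpow)

private lemma scF [Finite α] (H : SpliceHyp e f a₀ b₀ p) (b : β) :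
    p.SameCycle (Sum.inr b) (Sum.inr (f b)) := by
  by_cases hb : b = b₀
  · subst hb; exact scHb H
  · rw [← H.h3 b hb]; exact sc_self_apply p _

private lemma scFsc [Finite α] (H : SpliceHyp e f a₀ b₀ p) {b b' : β}
    (h : f.SameCycle b b') [Finite β] : p.SameCycle (Sum.inr b) (Sum.inr b') := by
  obtain ⟨n, -, rfl⟩ := h.exists_pow_eq'
  clear h
  induction n generalizing b with
  | zero => exact sc_of_eq (by simp)
  | succ n ih =>
    have hrw : (f ^ (n + 1)) b = (f ^ n) (f b) := by
      rw [← Equiv.Perm.mul_apply, ← pow_succ]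
    rw [hrw]
    exact (scF H b).trans (ih (b := f b))

private lemma scEscAux [Finite α] (H : SpliceHyp e f a₀ b₀ p) :
    ∀ (n : ℕ) (a : α), ¬ e.SameCycle a a₀ → ∀ (w : a ≠ a₀) (w' : (e ^ n) a ≠ a₀),
      p.SameCycle (Sum.inl ⟨a, w⟩) (Sum.inl ⟨(e ^ n) a, w'⟩) := by
  intro n
  induction n with
  | zero => intro a hn w w'; exact sc_of_eq (by simp)
  | succ n ih =>
    intro a hn w w'
    have hea : ¬ e.SameCycle (e a) a₀ := fun hc => hn ((sc_self_apply e a).trans hc)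
    have he : e a ≠ a₀ := ne_of_not_sc hea
    have step : p.SameCycle (Sum.inl ⟨a, w⟩) (Sum.inl ⟨e a, he⟩) := by
      rw [← H.h2 a w he]; exact sc_self_apply p _
    have hw2 : (e ^ n) (e a) ≠ a₀ := fun hc =>
      hea ((sc_pow e n (e a)).trans (sc_of_eq hc))
    have key := step.trans (ih (e a) hea he hw2)
    have hrw : (⟨(e ^ n) (e a), hw2⟩ : {x : α // x ≠ a₀}) = ⟨(e ^ (n + 1)) a, w'⟩ :=
      Subtype.ext (show (e ^ n) (e a) = (e ^ (n + 1)) a by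
        rw [← Equiv.Perm.mul_apply, ← pow_succ])
    rwa [hrw] at key

private lemma scEsc [Finite α] (H : SpliceHyp e f a₀ b₀ p) {a a' : α}
    (hn : ¬ e.SameCycle a a₀) (h : e.SameCycle a a')
    (w : a ≠ a₀) (w' : a' ≠ a₀) :
    p.SameCycle (Sum.inl ⟨a, w⟩) (Sum.inl ⟨a', w'⟩) := by
  obtain ⟨n, -, rfl⟩ := h.exists_pow_eq'
  exact scEscAux H n a hn w w'

open Classical in
private noncomputable def psi0 (e : Equiv.Perm α) (f : Equiv.Perm β) (a₀ : α) (b₀ : β) :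
    ({a : α // a ≠ a₀} ⊕ β) → Quotient (sameCycleSetoid e) ⊕ Quotient (sameCycleSetoid f) :=
  Sum.elim
    (fun a => if e.SameCycle a.1 a₀ then Sum.inr (Quotient.mk (sameCycleSetoid f) b₀)
      else Sum.inl (Quotient.mk (sameCycleSetoid e) a.1))
    (fun b => Sum.inr (Quotient.mk (sameCycleSetoid f) b))

private lemma psi0_step (H : SpliceHyp e f a₀ b₀ p) (x : {a : α // a ≠ a₀} ⊕ β) :
    psi0 e f a₀ b₀ (p x) = psi0 e f a₀ b₀ x := by
  classical
  cases x with
  | inl a =>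
    obtain ⟨a, ha⟩ := a
    by_cases he : e a = a₀
    · rw [H.h1 a ha he]
      have hsc : e.SameCycle a a₀ := ⟨1, by simp [he]⟩
      simp only [psi0, Sum.elim_inl, Sum.elim_inr, if_pos hsc]
      exact congrArg Sum.inr (Quotient.sound (sc_self_apply f b₀).symm)
    · rw [H.h2 a ha he]
      by_cases h : e.SameCycle a a₀
      · have h' : e.SameCycle (e a) a₀ := Equiv.Perm.sameCycle_apply_left.mpr h
        simp only [psi0, Sum.elim_inl, if_pos h, if_pos h']
      · have h' : ¬ e.SameCycle (e a) a₀ := fun hc =>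
          h (Equiv.Perm.sameCycle_apply_left.mp hc)
        simp only [psi0, Sum.elim_inl, if_neg h, if_neg h']
        exact congrArg Sum.inl (Quotient.sound (sc_self_apply e a).symm)
  | inr b =>
    by_cases hb : b = b₀
    · rw [hb]
      by_cases hea : e a₀ = a₀
      · rw [H.h4 hea]
        simp only [psi0, Sum.elim_inr]
        exact congrArg Sum.inr (Quotient.sound (sc_self_apply f b₀).symm)
      · rw [H.h5 hea]
        have h' : e.SameCycle (e a₀) a₀ :=
          Equiv.Perm.sameCycle_apply_left.mpr (Equiv.Perm.SameCycle.refl e a₀)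
        simp only [psi0, Sum.elim_inl, Sum.elim_inr, if_pos h']
    · rw [H.h3 b hb]
      simp only [psi0, Sum.elim_inr]
      exact congrArg Sum.inr (Quotient.sound (sc_self_apply f b).symm)

private lemma psi0_sc [Finite α] [Finite β] (H : SpliceHyp e f a₀ b₀ p)
    {x y : {a : α // a ≠ a₀} ⊕ β} (h : p.SameCycle x y) :
    psi0 e f a₀ b₀ x = psi0 e f a₀ b₀ y := by
  classical
  obtain ⟨n, -, rfl⟩ := h.exists_pow_eq'
  clear h
  induction n with
  | zero => simp
  | succ n ih =>
    have hrw : (p ^ (n + 1)) x = p ((p ^ n) x) := by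
      rw [pow_succ', Equiv.Perm.mul_apply]
    rw [hrw, psi0_step H, ih]

private lemma sc_of_equiv {γ : Type*} {e : Equiv.Perm γ} {x y : γ}
    (h : @HasEquiv.Equiv γ (@instHasEquivOfSetoid γ (sameCycleSetoid e)) x y) :
    e.SameCycle x y := h

private lemma equiv_of_sc {γ : Type*} {e : Equiv.Perm γ} {x y : γ} (h : e.SameCycle x y) :
    @HasEquiv.Equiv γ (@instHasEquivOfSetoid γ (sameCycleSetoid e)) x y := h

open Classical in
private lemma splice_card [Finite α] [Finite β] (H : SpliceHyp e f a₀ b₀ p) :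
    permOrbitCount p + 1 = permOrbitCount e + permOrbitCount f := by
  have E : (Quotient (sameCycleSetoid e) ⊕ Quotient (sameCycleSetoid f)) ≃
      (Quotient (sameCycleSetoid p) ⊕ Unit) :=
    { toFun := Sum.elim
        (Quotient.lift (fun a => if h : e.SameCycle a a₀ then Sum.inr () else
            Sum.inl (Quotient.mk (sameCycleSetoid p) (Sum.inl ⟨a, ne_of_not_sc h⟩)))
          (by
            intro a a' haa'
            replace haa' := sc_of_equiv haa'
            by_cases h : e.SameCycle a a₀
            · rw [dif_pos h, dif_pos ((Equiv.Perm.SameCycle.symm haa').trans h)]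
            · have h' : ¬ e.SameCycle a' a₀ := fun hc =>
                h ((show e.SameCycle a a' from haa').trans hc)
              rw [dif_neg h, dif_neg h']
              exact congrArg Sum.inl (Quotient.sound (equiv_of_sc (scEsc H h haa' _ _)))))
        (Quotient.lift (fun b => Sum.inl (Quotient.mk (sameCycleSetoid p) (Sum.inr b)))
          (fun b b' hbb' => congrArg Sum.inl (Quotient.sound (equiv_of_sc (scFsc H (sc_of_equiv hbb'))))))
      invFun := Sum.elim
        (Quotient.lift (psi0 e f a₀ b₀) (fun x y h => psi0_sc H (sc_of_equiv h)))
        (fun _ => Sum.inl (Quotient.mk (sameCycleSetoid e) a₀))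
      left_inv := by
        rintro (qa | qb)
        · refine Quotient.inductionOn qa (fun a => ?_)
          simp only [Sum.elim_inl, Quotient.lift_mk]
          by_cases h : e.SameCycle a a₀
          · rw [dif_pos h]
            exact congrArg Sum.inl (Quotient.sound h.symm)
          · rw [dif_neg h]
            simp only [Sum.elim_inl, Quotient.lift_mk]
            simp only [Sum.elim_inl, Quotient.lift_mk, psi0, if_neg h]
        · refine Quotient.inductionOn qb (fun b => ?_)
          simp only [Sum.elim_inr, Quotient.lift_mk, Sum.elim_inl]
          simp only [Sum.elim_inr, Quotient.lift_mk, Sum.elim_inl, psi0]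
      right_inv := by
        rintro (qx | u)
        · refine Quotient.inductionOn qx (fun x => ?_)
          cases x with
          | inl a =>
            obtain ⟨a, ha⟩ := a
            simp only [Sum.elim_inl, Quotient.lift_mk]
            simp only [Sum.elim_inl, Quotient.lift_mk, psi0]
            by_cases h : e.SameCycle a a₀
            · rw [if_pos h]
              simp only [Sum.elim_inr, Quotient.lift_mk]
              refine congrArg Sum.inl (Quotient.sound ?_)
              obtain ⟨n, -, hn⟩ := h.exists_pow_eq'
              exact ((scC H n a ha hn).trans (scHb H).symm).symm
            · rw [if_neg h]
              simp only [Sum.elim_inl, Quotient.lift_mk, dif_neg h]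
          | inr b =>
            simp only [Sum.elim_inl, Quotient.lift_mk, Sum.elim_inr]
            simp only [Sum.elim_inl, Quotient.lift_mk, psi0, Sum.elim_inr]
        · obtain ⟨⟩ := u
          simp only [Sum.elim_inr, Sum.elim_inl, Quotient.lift_mk]
          rw [dif_pos (Equiv.Perm.SameCycle.refl e a₀)] }
  have hcard := Nat.card_congr E
  rw [Nat.card_sum, Nat.card_sum] at hcard
  have hu : Nat.card Unit = 1 := Nat.card_unique
  unfold permOrbitCount
  omega

end Splice


section GlueCount

variable {D : ℕ} {V₁ W₁ V₂ W₂ : Type*}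

private lemma glue_spliceHyp (σ : Fin D → V₁ ≃ W₁) (τ : Fin D → V₂ ≃ W₂)
    (v₁ : V₁) (w₂ : W₂) (i j : Fin D) :
    SpliceHyp ((σ i).trans (σ j).symm) ((τ i).trans (τ j).symm) v₁ ((τ i).symm w₂)
      ((glue σ τ v₁ w₂ i).trans ((glue σ τ v₁ w₂ j).symm)) := by
  constructor
  · intro a ha he
    simp only [Equiv.trans_apply] at he
    simp [glue, he, Equiv.apply_symm_apply]
  · intro a ha he
    simp only [Equiv.trans_apply] at he
    simp [glue, he]
  · intro b hb
    have hb' : τ i b ≠ w₂ := fun hc => hb (by rw [← hc, Equiv.symm_apply_apply])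
    simp [glue, hb']
  · intro he
    simp only [Equiv.trans_apply] at he
    simp [glue, he, Equiv.apply_symm_apply]
  · intro he
    simp only [Equiv.trans_apply] at he
    simp [glue, he, Equiv.apply_symm_apply]

private lemma faceCount_glue [Fintype V₁] [Fintype V₂]
    (σ : Fin D → V₁ ≃ W₁) (τ : Fin D → V₂ ≃ W₂) (v₁ : V₁) (w₂ : W₂) (i j : Fin D) :
    faceCount (glue σ τ v₁ w₂) i j + 1 = faceCount σ i j + faceCount τ i j :=
  splice_card (glue_spliceHyp σ τ v₁ w₂ i j)

private lemma totalFaces_glue [Fintype V₁] [Fintype V₂]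
    (σ : Fin D → V₁ ≃ W₁) (τ : Fin D → V₂ ≃ W₂) (v₁ : V₁) (w₂ : W₂) :
    totalFaces (glue σ τ v₁ w₂) +
        (Finset.univ.filter (fun p : Fin D × Fin D => p.1 < p.2)).card =
      totalFaces σ + totalFaces τ := by
  unfold totalFaces
  rw [Finset.card_eq_sum_ones, ← Finset.sum_add_distrib, ← Finset.sum_add_distrib]
  exact Finset.sum_congr rfl fun p _ => faceCount_glue σ τ v₁ w₂ p.1 p.2

private lemma card_lt_pairs (D : ℕ) :
    2 * (Finset.univ.filter (fun p : Fin D × Fin D => p.1 < p.2)).card + D = D * D := by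
  classical
  have hLG : (Finset.univ.filter (fun p : Fin D × Fin D => p.1 < p.2)).card =
      (Finset.univ.filter (fun p : Fin D × Fin D => p.2 < p.1)).card := by
    refine Finset.card_bij (fun p _ => p.swap) ?_ ?_ ?_
    · intro p hp; simp only [Finset.mem_filter, Finset.mem_univ, true_and] at hp ⊢
      exact hp
    · intro p hp q hq h
      exact Prod.swap_injective h
    · intro q hq
      simp only [Finset.mem_filter, Finset.mem_univ, true_and] at hq
      exact ⟨q.swap, by simp [Finset.mem_filter, hq], by simp⟩
  have hsplit := Finset.card_filter_add_card_filter_not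
    (s := (Finset.univ : Finset (Fin D × Fin D))) (p := fun p => p.1 < p.2)
  have hneg : (Finset.univ.filter (fun p : Fin D × Fin D => ¬ p.1 < p.2)) =
      (Finset.univ.filter (fun p : Fin D × Fin D => p.2 < p.1)) ∪
        (Finset.univ.filter (fun p : Fin D × Fin D => p.2 = p.1)) := by
    rw [← Finset.filter_or]
    exact Finset.filter_congr fun p _ => by
      constructor
      · intro h; exact lt_or_eq_of_le (not_lt.mp h)
      · rintro (h | h)
        · exact not_lt.mpr h.le
        · exact not_lt.mpr h.le
  have hdisj : Disjoint (Finset.univ.filter (fun p : Fin D × Fin D => p.2 < p.1))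
      (Finset.univ.filter (fun p : Fin D × Fin D => p.2 = p.1)) := by
    rw [Finset.disjoint_left]
    intro p hp hq
    simp only [Finset.mem_filter, Finset.mem_univ, true_and] at hp hq
    exact absurd hq (ne_of_lt hp)
  have hdiag : (Finset.univ.filter (fun p : Fin D × Fin D => p.2 = p.1)).card = D := by
    have : (Finset.univ.filter (fun p : Fin D × Fin D => p.2 = p.1)) =
        (Finset.univ : Finset (Fin D)).diag := by
      ext ⟨x, y⟩
      simp [Finset.mem_diag, eq_comm]
    rw [this, Finset.diag_card, Finset.card_univ, Fintype.card_fin]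
  rw [hneg, Finset.card_union_of_disjoint hdisj, hdiag, ← hLG] at hsplit
  have : (Finset.univ : Finset (Fin D × Fin D)).card = D * D := by
    rw [Finset.card_univ, Fintype.card_prod, Fintype.card_fin]
  omega

end GlueCount

/-- Melonic graphs (graphs of vanishing degree) are closed under the
colored gluing. -/
theorem glue_melonic {D : ℕ} (hD : 2 ≤ D) {V₁ W₁ V₂ W₂ : Type*}
    [Fintype V₁] [Fintype W₁] [Fintype V₂] [Fintype W₂]
    (hne₁ : Nonempty V₁) (hne₂ : Nonempty V₂)
    (σ : Fin D → V₁ ≃ W₁) (τ : Fin D → V₂ ≃ W₂) (v₁ : V₁) (w₂ : W₂)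
    (hσ : graphDegree σ = 0) (hτ : graphDegree τ = 0) :
    graphDegree (glue σ τ v₁ w₂) = 0 := by
  classical
  have hc : (Nat.factorial (D - 2) : ℚ) / 2 ≠ 0 := by
    apply div_ne_zero
    · exact_mod_cast Nat.factorial_ne_zero _
    · norm_num
  unfold graphDegree at hσ hτ ⊢
  have hXσ := (mul_eq_zero.mp hσ).resolve_left hc
  have hXτ := (mul_eq_zero.mp hτ).resolve_left hc
  rw [mul_eq_zero]
  right
  have hk2 : (Nat.card ({v : V₁ // v ≠ v₁} ⊕ V₂) : ℚ) =
      (Nat.card V₁ : ℚ) - 1 + Nat.card V₂ := by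
    rw [Nat.card_sum]
    have h1 : Nat.card {v : V₁ // v ≠ v₁} + 1 = Nat.card V₁ := by
      rw [Nat.card_eq_fintype_card, Nat.card_eq_fintype_card,
        Fintype.card_subtype_compl, Fintype.card_subtype_eq]
      have : 0 < Fintype.card V₁ := Fintype.card_pos
      omega
    push_cast [← h1]
    ring
  have hF := totalFaces_glue σ τ v₁ w₂
  have hP := card_lt_pairs D
  have hFq : (totalFaces (glue σ τ v₁ w₂) : ℚ) +
      ((Finset.univ.filter (fun p : Fin D × Fin D => p.1 < p.2)).card : ℚ) =
      (totalFaces σ : ℚ) + (totalFaces τ : ℚ) := by exact_mod_cast hF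
  have hPq : 2 * ((Finset.univ.filter (fun p : Fin D × Fin D => p.1 < p.2)).card : ℚ) +
      (D : ℚ) = (D : ℚ) * (D : ℚ) := by exact_mod_cast hP
  linear_combination hXσ + hXτ - hFq + hPq / 2 + (((D : ℚ) - 1) * ((D : ℚ) - 2) / 2) * hk2
end

section
/- Index-sum evaluation for one color: let V and W be finite types, σ, τ : V ≃ W bijections, and N ≥ 1. Then Σ_{a : V → Fin N} Σ_{b : W → Fin N} Π_{v : V} (if a v = b (σ v) then 1 else 0) · (if a v = b (τ v) then 1 else 0) = N^c, where c is the number of orbits on W of the permutation τ.symm.trans σ (i.e. w ↦ σ (τ.symm w)). -/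
open scoped BigOperators

variable {D N : ℕ}

section Aux

variable {α : Type*} {β : Type*} (e : Equiv.Perm α)

lemma inv_pow_nat {b : α → β} (h : ∀ w, b (e w) = b w) :
    ∀ (n : ℕ) (x : α), b ((e ^ n) x) = b x := by
  intro n
  induction n with
  | zero => simp
  | succ n ih => intro x; rw [pow_succ, Equiv.Perm.mul_apply, ih (e x), h]

lemma inv_sameCycle {b : α → β} (h : ∀ w, b (e w) = b w) {x y : α}
    (hxy : e.SameCycle x y) : b x = b y := by
  obtain ⟨i, hi⟩ := hxy
  obtain ⟨n, rfl | rfl⟩ := i.eq_nat_or_neg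
  · rw [← hi, zpow_natCast, inv_pow_nat e h]
  · have : (e ^ n) y = x := by
      rw [← hi, zpow_neg, zpow_natCast, ← Equiv.Perm.mul_apply, mul_inv_cancel]; rfl
    rw [← this, inv_pow_nat e h]

/-- Functions invariant under `e` correspond to functions on orbits. -/
noncomputable def invEquiv : {b : α → β // ∀ w, b (e w) = b w} ≃
    (Quotient (sameCycleSetoid e) → β) where
  toFun b := Quotient.lift b.1 (fun _ _ h => inv_sameCycle e b.2 h)
  invFun g := ⟨fun w => g (Quotient.mk _ w), fun w =>
    congrArg g (Quotient.sound (⟨-1, by simp⟩ : e.SameCycle (e w) w))⟩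
  left_inv b := rfl
  right_inv g := by funext q; induction q using Quotient.ind; rfl

end Aux

-- **Statement 11.** Index-sum evaluation for one color: the sum over indices of the
-- product of Kronecker deltas equals `N^c` with `c` the number of orbits (faces) of the
-- permutation `τ.symm.trans σ` of `W`.
open Classical in
theorem index_sum_eval {N : ℕ} (hN : 1 ≤ N) {V W : Type*} [Fintype V] [Fintype W]
    (σ τ : V ≃ W) :
    ∑ a : V → Fin N, ∑ b : W → Fin N,
        ∏ v : V, ((if a v = b (σ v) then (1 : ℂ) else 0) *
          (if a v = b (τ v) then (1 : ℂ) else 0))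
      = (N : ℂ) ^ permOrbitCount (τ.symm.trans σ) := by
  set e : Equiv.Perm W := τ.symm.trans σ with he
  rw [Finset.sum_comm]
  have step1 : ∀ b : W → Fin N,
      (∑ a : V → Fin N, ∏ v : V, ((if a v = b (σ v) then (1 : ℂ) else 0) *
          (if a v = b (τ v) then (1 : ℂ) else 0)))
        = if (∀ w : W, b (e w) = b w) then (1 : ℂ) else 0 := by
    intro b
    have hsum : ∀ x y : Fin N,
        (∑ i : Fin N, ((if i = x then (1 : ℂ) else 0) * (if i = y then 1 else 0)))
          = if x = y then 1 else 0 := by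
      intro x y
      rw [Finset.sum_eq_single x]
      · by_cases h : x = y <;> simp [h]
      · intro i _ hi; simp [hi]
      · simp
    have hps := Finset.prod_univ_sum (κ := fun _ : V => Fin N)
      (t := fun _ : V => (Finset.univ : Finset (Fin N)))
      (f := fun v i => (if i = b (σ v) then (1 : ℂ) else 0) * (if i = b (τ v) then 1 else 0))
    rw [← Fintype.piFinset_univ, ← hps]
    simp_rw [hsum]
    rw [Finset.prod_boole]
    congr 1
    simp only [eq_iff_iff]
    constructor
    · intro h w
      have := h (τ.symm w) (Finset.mem_univ _)
      simpa [he] using this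
    · intro h v _
      have := h (τ v)
      simpa [he] using this
  simp_rw [step1]
  rw [Finset.sum_boole]
  have hcard : (Finset.univ.filter (fun b : W → Fin N => ∀ w, b (e w) = b w)).card
      = N ^ permOrbitCount e := by
    have h1 : (Finset.univ.filter (fun b : W → Fin N => ∀ w, b (e w) = b w)).card
        = Nat.card {b : W → Fin N // ∀ w, b (e w) = b w} := by
      rw [Nat.card_eq_fintype_card, Fintype.card_subtype]
    rw [h1, Nat.card_congr (invEquiv e), Nat.card_fun, Nat.card_eq_fintype_card (α := Fin N),
      Fintype.card_fin]
    rfl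
  rw [hcard]
  push_cast
  ring
end

section
/- Feynman amplitude evaluation: let V and W be finite types, σ : Fin D → (V ≃ W) a closed D-colored graph, σ₀ : V ≃ W an additional bijection of color 0 (the propagator pairing), and N ≥ 1. Then Σ_{a : V → Fin D → Fin N} Σ_{b : W → Fin D → Fin N} Π_{i : Fin D} Π_{v : V} (if a v i = b (σ i v) i then 1 else 0) · (if a v i = b (σ₀ v) i then 1 else 0) = N^{Σ_{i : Fin D} F^{0i}}, where F^{0i} is the number of orbits on W of the permutation σ₀.symm.trans (σ i) (the number of faces of colors 0 and i). -/
open scoped BigOperators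

variable {D N : ℕ}

private lemma invariant_of_sameCycle {α β : Type*} (e : Equiv.Perm α)
    (f : α → β) (hf : ∀ w, f (e w) = f w) {x y : α} (h : e.SameCycle x y) :
    f x = f y := by
  obtain ⟨n, rfl⟩ := h
  suffices H : ∀ (n : ℤ) (x : α), f ((e ^ n) x) = f x from (H n x).symm
  intro n
  induction n using Int.induction_on with
  | zero => intro x; simp
  | succ k ih =>
      intro x
      have hx : (e ^ ((k : ℤ) + 1)) x = e ((e ^ (k : ℤ)) x) := by
        rw [add_comm, zpow_add, zpow_one, Equiv.Perm.mul_apply]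
      rw [hx, hf, ih]
  | pred k ih =>
      intro x
      have hx : (e ^ (-(k : ℤ) - 1)) x = (e ^ (-(k : ℤ))) (e⁻¹ x) := by
        rw [sub_eq_add_neg, zpow_add, Equiv.Perm.mul_apply, zpow_neg_one]
      rw [hx, ih, ← hf (e⁻¹ x), Equiv.Perm.coe_inv, Equiv.apply_symm_apply]

/-- Functions invariant under a permutation are the same as functions on its orbits. -/
noncomputable def invariantEquiv {α β : Type*} (e : Equiv.Perm α) :
    {f : α → β // ∀ w, f (e w) = f w} ≃ (Quotient (sameCycleSetoid e) → β) where
  toFun f := Quotient.lift f.1 fun _ _ h => invariant_of_sameCycle e f.1 f.2 h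
  invFun g := ⟨fun w => g (Quotient.mk _ w), fun w =>
    congrArg g (Quotient.sound (show (e).SameCycle (e w) w from ⟨-1, by simp⟩))⟩
  left_inv f := rfl
  right_inv g := funext fun q => Quotient.inductionOn q fun w => rfl

private lemma card_invariant {α : Type*} [Fintype α] (e : Equiv.Perm α) (N : ℕ) :
    Nat.card {f : α → Fin N // ∀ w, f (e w) = f w} = N ^ permOrbitCount e := by
  rw [Nat.card_congr (invariantEquiv e), permOrbitCount, Nat.card_fun,
    Nat.card_eq_fintype_card, Fintype.card_fin]

/-- Pairs `(a, b)` satisfying all the delta constraints correspond to families of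
invariant functions, one for each color. -/
noncomputable def pairEquiv {D N : ℕ} {V W : Type*} (σ : Fin D → V ≃ W) (σ₀ : V ≃ W) :
    {p : (V → Fin D → Fin N) × (W → Fin D → Fin N) //
        ∀ i v, p.1 v i = p.2 (σ i v) i ∧ p.1 v i = p.2 (σ₀ v) i} ≃
      ∀ i : Fin D, {f : W → Fin N // ∀ w, f ((σ₀.symm.trans (σ i)) w) = f w} where
  toFun p i := ⟨fun w => p.1.2 w i, fun w => by
    have h1 := (p.2 i (σ₀.symm w)).1
    have h2 := (p.2 i (σ₀.symm w)).2
    rw [Equiv.apply_symm_apply] at h2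
    simpa using h1.symm.trans h2⟩
  invFun g := ⟨(fun v i => (g i).1 (σ₀ v), fun w i => (g i).1 w), fun i v => by
    refine ⟨?_, rfl⟩
    have := (g i).2 (σ₀ v)
    simp only [Equiv.trans_apply, Equiv.symm_apply_apply] at this
    exact this.symm⟩
  left_inv p := by
    apply Subtype.ext
    apply Prod.ext
    · funext v i
      exact ((p.2 i v).2).symm
    · rfl
  right_inv g := rfl

-- **Statement 12.** Feynman amplitude evaluation: contracting a closed `D`-colored graph
-- `σ` with the propagator pairing `σ₀` (the color-`0` lines) produces one free index sum per
-- face of colors `0i`, giving `N^{Σ_i F^{0i}}`.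
open Classical in
theorem amplitude_eval {D N : ℕ} (hD : 1 ≤ D) (hN : 1 ≤ N) {V W : Type*}
    [Fintype V] [Fintype W] (σ : Fin D → V ≃ W) (σ₀ : V ≃ W) :
    ∑ a : V → Fin D → Fin N, ∑ b : W → Fin D → Fin N,
        ∏ i : Fin D, ∏ v : V,
          ((if a v i = b (σ i v) i then (1 : ℂ) else 0) *
            (if a v i = b (σ₀ v) i then (1 : ℂ) else 0))
      = (N : ℂ) ^ (∑ i : Fin D, permOrbitCount (σ₀.symm.trans (σ i))) := by
  classical
  have key : ∀ (a : V → Fin D → Fin N) (b : W → Fin D → Fin N) (i : Fin D) (v : V),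
      ((if a v i = b (σ i v) i then (1 : ℂ) else 0) *
        (if a v i = b (σ₀ v) i then (1 : ℂ) else 0)) =
      (if a v i = b (σ i v) i ∧ a v i = b (σ₀ v) i then (1 : ℂ) else 0) := by
    intro a b i v
    by_cases h1 : a v i = b (σ i v) i <;> by_cases h2 : a v i = b (σ₀ v) i <;>
      simp [h1, h2]
  have step1 : (∑ a : V → Fin D → Fin N, ∑ b : W → Fin D → Fin N,
        ∏ i : Fin D, ∏ v : V,
          ((if a v i = b (σ i v) i then (1 : ℂ) else 0) *
            (if a v i = b (σ₀ v) i then (1 : ℂ) else 0)))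
      = ∑ p : (V → Fin D → Fin N) × (W → Fin D → Fin N),
          (if (∀ i v, p.1 v i = p.2 (σ i v) i ∧ p.1 v i = p.2 (σ₀ v) i)
            then (1 : ℂ) else 0) := by
    rw [Fintype.sum_prod_type]
    refine Finset.sum_congr rfl fun a _ => Finset.sum_congr rfl fun b _ => ?_
    simp only [key, Finset.prod_boole, Finset.mem_univ, forall_true_left, forall_const]
  rw [step1, Finset.sum_boole]
  have hcard : (Finset.univ.filter
      (fun p : (V → Fin D → Fin N) × (W → Fin D → Fin N) =>
        ∀ i v, p.1 v i = p.2 (σ i v) i ∧ p.1 v i = p.2 (σ₀ v) i)).card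
      = N ^ (∑ i : Fin D, permOrbitCount (σ₀.symm.trans (σ i))) := by
    rw [← Fintype.card_subtype, ← Nat.card_eq_fintype_card,
      Nat.card_congr (pairEquiv σ σ₀), Nat.card_pi]
    simp only [card_invariant]
    exact Finset.prod_pow_eq_pow_sum _ _ _
  rw [hcard]
  push_cast
  ring
end

section
/- Face splitting over D-bubbles: let σ : Fin (D+1) → (V ≃ W) be a closed (D+1)-colored graph with colors 0, 1, ..., D, and let its D-bubbles be the orbits on V of the subgroup generated by { (σ i).trans (σ j).symm : i, j ≥ 1 }. Then for every pair of colors 1 ≤ i < j ≤ D each (i,j)-face is contained in a single D-bubble, and consequently Σ_{i=1}^{D} F^{0i}(σ) = F_G − Σ_ρ F_{B_ρ}, where F_G is the total number of faces of σ over all pairs of colors in {0,1,...,D}, and F_{B_ρ} is the number of faces with colors in {1,...,D} of the D-bubble B_ρ (the restriction of the bijections σ i, i ≥ 1, to the ρ-th orbit). -/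
open scoped BigOperators

variable {D N : ℕ}

/-- White vertices of the connected component `c` of a closed `D`-colored graph. -/
abbrev compWhite {V W : Type*} (σ : Fin D → V ≃ W) (c : Quotient (reachSetoid σ)) : Type _ :=
  {v : V // Quotient.mk (reachSetoid σ) v = c}

/-- Black vertices of the connected component `c` of a closed `D`-colored graph. -/
abbrev compBlack {V W : Type*} (σ : Fin D → V ≃ W) (c : Quotient (reachSetoid σ)) : Type _ :=
  {w : W // ∃ i, Quotient.mk (reachSetoid σ) ((σ i).symm w) = c}

lemma symm_reach {V W : Type*} (σ : Fin D → V ≃ W) (i j : Fin D) (w : W) :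
    Quotient.mk (reachSetoid σ) ((σ i).symm w) = Quotient.mk (reachSetoid σ) ((σ j).symm w) :=
  Quotient.sound ⟨(σ i).trans (σ j).symm, Subgroup.subset_closure ⟨i, j, rfl⟩, by simp⟩

/-- The restriction of the colored bijections to the connected component `c`. -/
def compEquiv {V W : Type*} (σ : Fin D → V ≃ W) (c : Quotient (reachSetoid σ)) (i : Fin D) :
    compWhite σ c ≃ compBlack σ c :=
  (σ i).subtypeEquiv fun v => by
    constructor
    · intro h
      exact ⟨i, by simpa using h⟩
    · rintro ⟨j, hj⟩
      have hv : Quotient.mk (reachSetoid σ) v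
          = Quotient.mk (reachSetoid σ) ((σ j).symm (σ i v)) := by
        conv_lhs => rw [show v = (σ i).symm (σ i v) by simp]
        exact symm_reach σ i j (σ i v)
      exact hv.trans hj

lemma comp_nonempty {V W : Type*} (σ : Fin D → V ≃ W) (c : Quotient (reachSetoid σ)) :
    Nonempty (compWhite σ c) := by
  obtain ⟨v, hv⟩ := Quotient.exists_rep c
  exact ⟨⟨v, hv⟩⟩

section Aux

lemma restrict_zpow_val {α : Type*} {p : α → Prop} (f : Equiv.Perm {x // p x}) (e : Equiv.Perm α)
    (h : ∀ x, (f x).val = e x.val) : ∀ (n : ℤ) (x : {x // p x}), ((f ^ n) x).val = (e ^ n) x.val := by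
  have hpow : ∀ (n : ℕ) (x : {x // p x}), ((f ^ n) x).val = (e ^ n) x.val := by
    intro n
    induction n with
    | zero => simp
    | succ n ih =>
      intro x
      rw [pow_succ, pow_succ]
      simp only [Equiv.Perm.mul_apply]
      rw [ih (f x), h]
  intro n x
  cases n with
  | ofNat n => simpa using hpow n x
  | negSucc n =>
    rw [zpow_negSucc, zpow_negSucc]
    apply (e ^ (n + 1)).injective
    rw [← hpow (n + 1) ((f ^ (n + 1))⁻¹ x)]
    simp

lemma class_zpow {V : Type*} (s : Setoid V) (e : Equiv.Perm V)
    (he : ∀ v, Quotient.mk s (e v) = Quotient.mk s v) :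
    ∀ (n : ℤ) (v : V), Quotient.mk s ((e ^ n) v) = Quotient.mk s v := by
  have hpow : ∀ (f : Equiv.Perm V), (∀ v, Quotient.mk s (f v) = Quotient.mk s v) →
      ∀ (n : ℕ) (v : V), Quotient.mk s ((f ^ n) v) = Quotient.mk s v := by
    intro f hf n
    induction n with
    | zero => simp
    | succ n ih =>
      intro v
      rw [pow_succ, Equiv.Perm.mul_apply, ih (f v), hf v]
  intro n v
  cases n with
  | ofNat n => simpa using hpow e he n v
  | negSucc n =>
    rw [zpow_negSucc]
    conv_rhs => rw [show v = (e ^ (n + 1)) ((e ^ (n + 1))⁻¹ v) by simp]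
    rw [hpow e he (n + 1)]

lemma orbit_split {V : Type*} [Finite V] (s : Setoid V) (e : Equiv.Perm V)
    (he : ∀ v, Quotient.mk s (e v) = Quotient.mk s v)
    (ec : ∀ c : Quotient s, Equiv.Perm {v : V // Quotient.mk s v = c})
    (hec : ∀ c x, ((ec c) x).val = e x.val) :
    permOrbitCount e = ∑ᶠ c : Quotient s, permOrbitCount (ec c) := by
  classical
  have hforward : ∀ c (x y : {v : V // Quotient.mk s v = c}),
      (sameCycleSetoid (ec c)).r x y → e.SameCycle x.val y.val := by
    rintro c x y ⟨n, hn⟩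
    exact ⟨n, by rw [← restrict_zpow_val (ec c) e (hec c) n x, hn]⟩
  have hback : ∀ c (x y : {v : V // Quotient.mk s v = c}),
      e.SameCycle x.val y.val → (sameCycleSetoid (ec c)).r x y := by
    rintro c x y ⟨n, hn⟩
    exact ⟨n, Subtype.ext (by rw [restrict_zpow_val (ec c) e (hec c) n x, hn])⟩
  set F : (Σ c : Quotient s, Quotient (sameCycleSetoid (ec c))) → Quotient (sameCycleSetoid e) :=
    fun q => Quotient.lift (fun x => Quotient.mk (sameCycleSetoid e) x.val)
      (fun a b h => Quotient.sound (hforward q.1 a b h)) q.2 with hF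
  have hbij : Function.Bijective F := by
    constructor
    · rintro ⟨c, q⟩ ⟨c', q'⟩ h
      obtain ⟨x, rfl⟩ := Quotient.exists_rep q
      obtain ⟨y, rfl⟩ := Quotient.exists_rep q'
      have hxy : e.SameCycle x.val y.val := Quotient.exact h
      obtain ⟨n, hn⟩ := hxy
      have hcc : c = c' := by
        rw [← x.2, ← y.2, ← hn]
        exact (class_zpow s e he n x.val).symm
      subst hcc
      exact congrArg (fun q => (⟨c, q⟩ : Σ c : Quotient s, Quotient (sameCycleSetoid (ec c))))
        (Quotient.sound (hback c x y ⟨n, hn⟩))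
    · intro q
      obtain ⟨v, rfl⟩ := Quotient.exists_rep q
      exact ⟨⟨Quotient.mk s v, Quotient.mk _ ⟨v, rfl⟩⟩, rfl⟩
  haveI : Fintype (Quotient s) := Fintype.ofFinite _
  haveI : ∀ c : Quotient s, Fintype (Quotient (sameCycleSetoid (ec c))) :=
    fun c => Fintype.ofFinite _
  rw [permOrbitCount, ← Nat.card_eq_of_bijective F hbij, Nat.card_eq_fintype_card,
    Fintype.card_sigma, finsum_eq_sum_of_fintype]
  simp [permOrbitCount, Nat.card_eq_fintype_card]

end Aux

/-- Face splitting over `D`-bubbles of a closed `(D+1)`-colored graph: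
every `(i,j)`-face with colors `1 ≤ i < j ≤ D` is contained in a single `D`-bubble, and
`Σ_{i=1}^D F^{0i} = F_G − Σ_ρ F_{B_ρ}`. -/
theorem face_bubble_split {D : ℕ} (hD : 1 ≤ D) {V W : Type*} [Fintype V] [Fintype W]
    (σ : Fin (D + 1) → V ≃ W) :
    (∀ i j : Fin D, i < j → ∀ v v' : V,
        Equiv.Perm.SameCycle ((σ i.succ).trans (σ j.succ).symm) v v' →
          Quotient.mk (reachSetoid (fun k : Fin D => σ k.succ)) v
            = Quotient.mk (reachSetoid (fun k : Fin D => σ k.succ)) v') ∧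
      ∑ i : Fin D, permOrbitCount ((σ 0).trans (σ i.succ).symm)
        = (∑ p ∈ Finset.univ.filter (fun p : Fin (D + 1) × Fin (D + 1) => p.1 < p.2),
            permOrbitCount ((σ p.1).trans (σ p.2).symm))
          - ∑ᶠ ρ : Quotient (reachSetoid (fun k : Fin D => σ k.succ)),
              ∑ p ∈ Finset.univ.filter (fun p : Fin D × Fin D => p.1 < p.2),
                permOrbitCount
                  ((compEquiv (fun k : Fin D => σ k.succ) ρ p.1).trans
                    (compEquiv (fun k : Fin D => σ k.succ) ρ p.2).symm) := by
  classical
  set τ : Fin D → V ≃ W := fun k => σ k.succ with hτ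
  have hgen : ∀ i j : Fin D, ((τ i).trans (τ j).symm : Equiv.Perm V) ∈ bubbleGroup τ :=
    fun i j => Subgroup.subset_closure ⟨i, j, rfl⟩
  have he : ∀ (i j : Fin D) (v : V),
      Quotient.mk (reachSetoid τ) (((τ i).trans (τ j).symm : Equiv.Perm V) v)
        = Quotient.mk (reachSetoid τ) v :=
    fun i j v => (Quotient.sound
      (show ∃ g ∈ bubbleGroup τ, g v = ((τ i).trans (τ j).symm : Equiv.Perm V) v from
        ⟨_, hgen i j, rfl⟩)).symm
  have part1 : ∀ i j : Fin D, i < j → ∀ v v' : V,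
      Equiv.Perm.SameCycle ((σ i.succ).trans (σ j.succ).symm) v v' →
        Quotient.mk (reachSetoid τ) v = Quotient.mk (reachSetoid τ) v' := by
    rintro i j _ v v' ⟨n, hn⟩
    rw [← hn]
    exact (class_zpow _ _ (he i j) n v).symm
  refine ⟨part1, ?_⟩
  haveI : Fintype (Quotient (reachSetoid τ)) := Fintype.ofFinite _
  -- per-pair splitting over bubbles
  have hsplit : ∀ i j : Fin D,
      permOrbitCount ((σ i.succ).trans (σ j.succ).symm : Equiv.Perm V)
        = ∑ᶠ ρ : Quotient (reachSetoid τ),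
            permOrbitCount ((compEquiv τ ρ i).trans (compEquiv τ ρ j).symm) :=
    fun i j => orbit_split (reachSetoid τ) _ (he i j)
      (fun ρ => (compEquiv τ ρ i).trans (compEquiv τ ρ j).symm) (fun ρ x => rfl)
  set f : Fin (D + 1) × Fin (D + 1) → ℕ :=
    fun p => permOrbitCount ((σ p.1).trans (σ p.2).symm) with hf
  set A : ℕ := ∑ i : Fin D, permOrbitCount ((σ 0).trans (σ i.succ).symm) with hA
  set B : ℕ := ∑ p ∈ Finset.univ.filter (fun p : Fin D × Fin D => p.1 < p.2),
    permOrbitCount ((σ p.1.succ).trans (σ p.2.succ).symm) with hB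
  have hclaim1 : ∑ p ∈ Finset.univ.filter (fun p : Fin (D + 1) × Fin (D + 1) => p.1 < p.2),
      f p = A + B := by
    rw [← Finset.sum_filter_add_sum_filter_not
      (Finset.univ.filter (fun p : Fin (D + 1) × Fin (D + 1) => p.1 < p.2))
      (fun p => p.1 = 0) f]
    congr 1
    · rw [hA]
      refine Finset.sum_nbij' (fun p => (⟨p.2.val - 1, by omega⟩ : Fin D))
        (fun k => ((0 : Fin (D + 1)), k.succ)) ?_ ?_ ?_ ?_ ?_
      · intro a _; exact Finset.mem_univ _
      · intro k _
        simp [Fin.succ_pos]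
      · intro p hp
        simp only [Finset.mem_filter, Finset.mem_univ, true_and] at hp
        obtain ⟨hlt, h0⟩ := hp
        have h2 : (0 : ℕ) < p.2.val := by
          have := hlt; rw [h0] at this
          exact this
        ext
        · exact (congrArg Fin.val h0).symm ▸ rfl
        · simp [Fin.succ]; omega
      · intro k _
        ext
        simp [Fin.succ]
      · intro p hp
        simp only [Finset.mem_filter, Finset.mem_univ, true_and] at hp
        obtain ⟨hlt, h0⟩ := hp
        have h2 : (0 : ℕ) < p.2.val := by
          have := hlt; rw [h0] at this; exact this
        have hp2 : p = ((0 : Fin (D + 1)), Fin.succ (⟨p.2.val - 1, by omega⟩ : Fin D)) := by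
          ext
          · exact congrArg Fin.val h0
          · simp [Fin.succ]; omega
        rw [hf]
        conv_lhs => rw [hp2]
    · rw [hB]
      refine Finset.sum_nbij' (fun p => ((⟨p.1.val - 1, by omega⟩ : Fin D),
          (⟨p.2.val - 1, by omega⟩ : Fin D)))
        (fun q => (q.1.succ, q.2.succ)) ?_ ?_ ?_ ?_ ?_
      · intro p hp
        simp only [Finset.mem_filter, Finset.mem_univ, true_and] at hp ⊢
        obtain ⟨hlt, h0⟩ := hp
        have h1 : (0 : ℕ) < p.1.val := by
          rcases Nat.eq_zero_or_pos p.1.val with h | h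
          · exact absurd (Fin.ext h) h0
          · exact h
        have : p.1.val < p.2.val := hlt
        simp [Fin.lt_def]; omega
      · intro q hq
        simp only [Finset.mem_filter, Finset.mem_univ, true_and] at hq ⊢
        refine ⟨Fin.succ_lt_succ_iff.mpr hq, ?_⟩
        exact (Fin.succ_ne_zero q.1)
      · intro p hp
        simp only [Finset.mem_filter, Finset.mem_univ, true_and] at hp
        obtain ⟨hlt, h0⟩ := hp
        have h1 : (0 : ℕ) < p.1.val := by
          rcases Nat.eq_zero_or_pos p.1.val with h | h
          · exact absurd (Fin.ext h) h0
          · exact h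
        have h2 : p.1.val < p.2.val := hlt
        ext
        · simp [Fin.succ]; omega
        · simp [Fin.succ]; omega
      · intro q _
        ext
        · simp [Fin.succ]
        · simp [Fin.succ]
      · intro p hp
        simp only [Finset.mem_filter, Finset.mem_univ, true_and] at hp
        obtain ⟨hlt, h0⟩ := hp
        have h1 : (0 : ℕ) < p.1.val := by
          rcases Nat.eq_zero_or_pos p.1.val with h | h
          · exact absurd (Fin.ext h) h0
          · exact h
        have h2 : p.1.val < p.2.val := hlt
        have hp2 : p = (Fin.succ (⟨p.1.val - 1, by omega⟩ : Fin D),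
            Fin.succ (⟨p.2.val - 1, by omega⟩ : Fin D)) := by
          ext
          · simp [Fin.succ]; omega
          · simp [Fin.succ]; omega
        rw [hf]
        conv_lhs => rw [hp2]
  have hclaim2 : ∑ᶠ ρ : Quotient (reachSetoid τ),
      ∑ p ∈ Finset.univ.filter (fun p : Fin D × Fin D => p.1 < p.2),
        permOrbitCount ((compEquiv τ ρ p.1).trans (compEquiv τ ρ p.2).symm) = B := by
    rw [finsum_eq_sum_of_fintype, Finset.sum_comm, hB]
    refine Finset.sum_congr rfl fun p _ => ?_
    rw [hsplit p.1 p.2, finsum_eq_sum_of_fintype]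
  rw [hclaim1, hclaim2, Nat.add_sub_cancel]
end

section
/- Unitary invariance of trace invariants: let (V, W, σ) be a closed D-colored graph, N ≥ 1, and U : Fin D → Matrix.unitaryGroup (Fin N) ℂ a family of unitary N × N matrices. For a tensor T : (Fin D → Fin N) → ℂ define the transformed tensor (U • T) (a) = Σ_{n : Fin D → Fin N} (Π_{i : Fin D} (U i) (a i) (n i)) · T n. Then Tr_σ(U • T) = Tr_σ(T). -/
open scoped BigOperators


lemma unitary_contract {N : ℕ} (U : Matrix.unitaryGroup (Fin N) ℂ) (y z : Fin N) :
    ∑ x : Fin N, (U : Matrix (Fin N) (Fin N) ℂ) x y *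
      (starRingEnd ℂ) ((U : Matrix (Fin N) (Fin N) ℂ) x z) = if z = y then 1 else 0 := by
  have h := U.2.1
  have h2 := congrFun (congrFun h z) y
  rw [Matrix.mul_apply, Matrix.one_apply] at h2
  rw [← h2]
  refine Finset.sum_congr rfl fun x _ => ?_
  rw [Matrix.star_apply, mul_comm]
  rfl

lemma sum_contract {D N : ℕ} {V W : Type*} [Fintype V] [DecidableEq V] [Fintype W] [DecidableEq W] (σ : Fin D → V ≃ W)
    (U : Fin D → Matrix.unitaryGroup (Fin N) ℂ) (n : V → Fin D → Fin N)
    (m : W → Fin D → Fin N) :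
    (∑ a : V → Fin D → Fin N,
      (∏ v, ∏ i, (U i : Matrix (Fin N) (Fin N) ℂ) (a v i) (n v i)) *
        ∏ w, (starRingEnd ℂ) (∏ i, (U i : Matrix (Fin N) (Fin N) ℂ) (a ((σ i).symm w) i) (m w i)))
    = if (fun w i => n ((σ i).symm w) i) = m then 1 else 0 := by
  classical
  have step1 : ∀ a : V → Fin D → Fin N,
      (∏ w, (starRingEnd ℂ) (∏ i, (U i : Matrix (Fin N) (Fin N) ℂ) (a ((σ i).symm w) i) (m w i)))
      = ∏ v, ∏ i, (starRingEnd ℂ) ((U i : Matrix (Fin N) (Fin N) ℂ) (a v i) (m (σ i v) i)) := by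
    intro a
    simp only [map_prod]
    rw [Finset.prod_comm]
    rw [Finset.prod_comm (s := Finset.univ (α := V))]
    refine Finset.prod_congr rfl fun i _ => ?_
    rw [← Equiv.prod_comp (σ i) (fun w => (starRingEnd ℂ)
      ((U i : Matrix (Fin N) (Fin N) ℂ) (a ((σ i).symm w) i) (m w i)))]
    simp
  calc (∑ a : V → Fin D → Fin N,
      (∏ v, ∏ i, (U i : Matrix (Fin N) (Fin N) ℂ) (a v i) (n v i)) *
        ∏ w, (starRingEnd ℂ) (∏ i, (U i : Matrix (Fin N) (Fin N) ℂ) (a ((σ i).symm w) i) (m w i)))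
      = ∑ a : V → Fin D → Fin N, ∏ v, ∏ i,
          ((U i : Matrix (Fin N) (Fin N) ℂ) (a v i) (n v i) *
            (starRingEnd ℂ) ((U i : Matrix (Fin N) (Fin N) ℂ) (a v i) (m (σ i v) i))) := by
        refine Finset.sum_congr rfl fun a _ => ?_
        rw [step1 a, ← Finset.prod_mul_distrib]
        exact Finset.prod_congr rfl fun v _ => (Finset.prod_mul_distrib).symm
    _ = ∏ v, ∏ i, ∑ c : Fin N,
          ((U i : Matrix (Fin N) (Fin N) ℂ) c (n v i) *
            (starRingEnd ℂ) ((U i : Matrix (Fin N) (Fin N) ℂ) c (m (σ i v) i))) := by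
        symm
        calc (∏ v, ∏ i, ∑ c : Fin N,
              ((U i : Matrix (Fin N) (Fin N) ℂ) c (n v i) *
                (starRingEnd ℂ) ((U i : Matrix (Fin N) (Fin N) ℂ) c (m (σ i v) i))))
            = ∏ v, ∑ x : Fin D → Fin N, ∏ i,
                ((U i : Matrix (Fin N) (Fin N) ℂ) (x i) (n v i) *
                  (starRingEnd ℂ) ((U i : Matrix (Fin N) (Fin N) ℂ) (x i) (m (σ i v) i))) := by
              refine Finset.prod_congr rfl fun v _ => ?_
              rw [Finset.prod_univ_sum, Fintype.piFinset_univ]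
          _ = _ := by rw [Finset.prod_univ_sum, Fintype.piFinset_univ]
    _ = ∏ v, ∏ i, (if (m (σ i v) i) = (n v i) then (1:ℂ) else 0) := by
        refine Finset.prod_congr rfl fun v _ => Finset.prod_congr rfl fun i _ => ?_
        exact unitary_contract (U i) (n v i) (m (σ i v) i)
    _ = if (fun w i => n ((σ i).symm w) i) = m then 1 else 0 := by
        simp only [Finset.prod_boole, Finset.mem_univ, forall_true_left, true_implies]
        refine if_congr ?_ rfl rfl
        constructor
        · intro h
          funext w i
          have := h ((σ i).symm w) i
          rw [Equiv.apply_symm_apply] at this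
          exact this.symm
        · intro h v i
          have := congrFun (congrFun h (σ i v)) i
          rw [Equiv.symm_apply_apply] at this
          exact this.symm



variable {D N : ℕ}

/-- The tensor transformed under the external tensor product of fundamental representations
of the unitary group: `(U • T) a = Σ_n (Π_i (U i) (a i) (n i)) T n`. -/
noncomputable def uTransform {D N : ℕ} (U : Fin D → Matrix.unitaryGroup (Fin N) ℂ)
    (T : (Fin D → Fin N) → ℂ) : (Fin D → Fin N) → ℂ :=
  fun a => ∑ n : Fin D → Fin N, (∏ i, ((U i : Matrix (Fin N) (Fin N) ℂ) (a i) (n i))) * T n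

/-- **Statement 14.** Unitary invariance of the trace invariants:
`Tr_σ(U • T) = Tr_σ(T)`. -/
theorem trace_unitary_invariant {D N : ℕ} (hD : 1 ≤ D) (hN : 1 ≤ N) {V W : Type*}
    [Finite V] [Finite W] (σ : Fin D → V ≃ W)
    (U : Fin D → Matrix.unitaryGroup (Fin N) ℂ) (T : (Fin D → Fin N) → ℂ) :
    traceInv σ (uTransform U T) = traceInv σ T := by
  classical
  letI : Fintype V := Fintype.ofFinite V
  letI : Fintype W := Fintype.ofFinite W
  unfold traceInv uTransform
  have e1 : ∀ a : V → Fin D → Fin N,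
      (∏ v, ∑ n : Fin D → Fin N,
        (∏ i, (U i : Matrix (Fin N) (Fin N) ℂ) (a v i) (n i)) * T n)
      = ∑ n : V → Fin D → Fin N, ∏ v,
          ((∏ i, (U i : Matrix (Fin N) (Fin N) ℂ) (a v i) (n v i)) * T (n v)) := by
    intro a
    rw [Finset.prod_univ_sum, Fintype.piFinset_univ]
  have e2 : ∀ a : V → Fin D → Fin N,
      (∏ w, (starRingEnd ℂ) (∑ m : Fin D → Fin N,
        (∏ i, (U i : Matrix (Fin N) (Fin N) ℂ) (a ((σ i).symm w) i) (m i)) * T m))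
      = ∑ m : W → Fin D → Fin N, ∏ w,
          ((starRingEnd ℂ) (∏ i, (U i : Matrix (Fin N) (Fin N) ℂ) (a ((σ i).symm w) i) (m w i)) *
            (starRingEnd ℂ) (T (m w))) := by
    intro a
    simp only [map_sum, map_mul]
    rw [Finset.prod_univ_sum, Fintype.piFinset_univ]
  calc (∑ a : V → Fin D → Fin N,
        (∏ v, ∑ n : Fin D → Fin N,
          (∏ i, (U i : Matrix (Fin N) (Fin N) ℂ) (a v i) (n i)) * T n) *
        ∏ w, (starRingEnd ℂ) (∑ m : Fin D → Fin N,
          (∏ i, (U i : Matrix (Fin N) (Fin N) ℂ) (a ((σ i).symm w) i) (m i)) * T m))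
      = ∑ a : V → Fin D → Fin N, ∑ n : V → Fin D → Fin N, ∑ m : W → Fin D → Fin N,
          (∏ v, ((∏ i, (U i : Matrix (Fin N) (Fin N) ℂ) (a v i) (n v i)) * T (n v))) *
          (∏ w, ((starRingEnd ℂ)
              (∏ i, (U i : Matrix (Fin N) (Fin N) ℂ) (a ((σ i).symm w) i) (m w i)) *
            (starRingEnd ℂ) (T (m w)))) := by
        refine Finset.sum_congr rfl fun a _ => ?_
        rw [e1 a, e2 a, Finset.sum_mul_sum]
    _ = ∑ n : V → Fin D → Fin N, ∑ m : W → Fin D → Fin N,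
          ((∏ v, T (n v)) * ∏ w, (starRingEnd ℂ) (T (m w))) *
          ∑ a : V → Fin D → Fin N,
            (∏ v, ∏ i, (U i : Matrix (Fin N) (Fin N) ℂ) (a v i) (n v i)) *
            ∏ w, (starRingEnd ℂ)
              (∏ i, (U i : Matrix (Fin N) (Fin N) ℂ) (a ((σ i).symm w) i) (m w i)) := by
        rw [Finset.sum_comm]
        refine Finset.sum_congr rfl fun n _ => ?_
        rw [Finset.sum_comm]
        refine Finset.sum_congr rfl fun m _ => ?_
        rw [Finset.mul_sum]
        refine Finset.sum_congr rfl fun a _ => ?_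
        rw [Finset.prod_mul_distrib, Finset.prod_mul_distrib]
        ring
    _ = ∑ n : V → Fin D → Fin N,
          ((∏ v, T (n v)) * ∏ w, (starRingEnd ℂ) (T fun i => n ((σ i).symm w) i)) := by
        refine Finset.sum_congr rfl fun n _ => ?_
        rw [Finset.sum_congr rfl fun m _ => by rw [sum_contract σ U n m]]
        simp only [mul_ite, mul_one, mul_zero, Finset.sum_ite_eq, Finset.mem_univ, if_true]
    _ = _ := rfl
end

section
/- Cutting identity (algebraic core of the Schwinger–Dyson equations): let (V, W, σ) be a closed D-colored graph and w̄₁ : W a black vertex. Then in the polynomial ring R, Σ_{p : Fin D → Fin N} pderiv (Sum.inl p) (tr_{σ,w̄₁}(p)) = Σ_{v : V} N^{d(v,w̄₁)} · tr_{σ/(v,w̄₁)}, where d(v,w̄₁) = card {i : Fin D | σ i v = w̄₁}, and the trace-invariant polynomial of a graph with empty vertex set is 1 by convention. -/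
open scoped BigOperators

variable {D N : ℕ}

/-- The polynomial ring in the tensor entries `T_n` (variables `Sum.inl n`) and their
complex conjugates `T̄_n` (variables `Sum.inr n`). -/
abbrev TensorRing (D N : ℕ) : Type :=
  MvPolynomial ((Fin D → Fin N) ⊕ (Fin D → Fin N)) ℂ

-- The trace invariant of a closed `D`-colored graph, as a polynomial in the tensor entries.
open Classical in
noncomputable def tracePoly {V W : Type*} [Finite V] [Finite W]
    (σ : Fin D → V ≃ W) : TensorRing D N :=
  letI := Fintype.ofFinite V
  letI := Fintype.ofFinite W
  ∑ a : V → Fin D → Fin N,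
    (∏ v, MvPolynomial.X (Sum.inl (a v))) *
      ∏ w, MvPolynomial.X (Sum.inr fun i => a ((σ i).symm w) i)

-- The trace invariant polynomial opened at the black vertex `w₁`: the factor
-- `X (Sum.inr (fun i => a ((σ i).symm w₁) i))` is replaced by the Kronecker delta.
open Classical in
noncomputable def tracePolyBlack {V W : Type*} [Finite V] [Finite W]
    (σ : Fin D → V ≃ W) (w₁ : W) (p : Fin D → Fin N) : TensorRing D N :=
  letI := Fintype.ofFinite V
  letI := Fintype.ofFinite W
  ∑ a : V → Fin D → Fin N,
    (∏ v, MvPolynomial.X (Sum.inl (a v))) *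
      ∏ w, if w = w₁ then ∏ i, (if a ((σ i).symm w) i = p i then (1 : TensorRing D N) else 0)
        else MvPolynomial.X (Sum.inr fun i => a ((σ i).symm w) i)


open MvPolynomial in
lemma pderiv_finset_prod {σ' R : Type*} [CommRing R] (x : σ')
    {ι : Type*} [DecidableEq ι] (s : Finset ι) (f : ι → MvPolynomial σ' R) :
    pderiv x (∏ i ∈ s, f i) = ∑ i ∈ s, pderiv x (f i) * ∏ j ∈ s.erase i, f j := by
  classical
  refine Finset.induction_on s (by simp) ?_
  intro a t ha ih
  rw [Finset.prod_insert ha, Derivation.leibniz, smul_eq_mul, smul_eq_mul, ih,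
    Finset.mul_sum, Finset.sum_insert ha, Finset.erase_insert ha, add_comm]
  congr 1
  · exact mul_comm _ _
  · refine Finset.sum_congr rfl fun i hi => ?_
    rw [Finset.erase_insert_of_ne (by rintro rfl; exact ha hi),
      Finset.prod_insert (fun h => ha (Finset.mem_of_mem_erase h))]
    ring

lemma sum_univ_inst {α M : Type*} [AddCommMonoid M] (F1 F2 : Fintype α) (f : α → M) :
    (@Finset.univ α F1).sum f = (@Finset.univ α F2).sum f := by
  rw [Subsingleton.elim F1 F2]

lemma prod_univ_inst {α M : Type*} [CommMonoid M] (F1 F2 : Fintype α) (f : α → M) :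
    (@Finset.univ α F1).prod f = (@Finset.univ α F2).prod f := by
  rw [Subsingleton.elim F1 F2]

open Classical in
noncomputable def cutEquiv {D N : ℕ} {V W : Type*} (σ : Fin D → V ≃ W) (wb : W) (v₁ : V) :
    {a : V → Fin D → Fin N // a v₁ = fun i => a ((σ i).symm wb) i} ≃
      (({v : V // v ≠ v₁} → Fin D → Fin N) × ({i : Fin D // σ i v₁ = wb} → Fin N)) where
  toFun a := (fun v => a.1 v.1, fun i => a.1 v₁ i.1)
  invFun bc := ⟨fun v => if h : v = v₁ then
      (fun i => if h' : σ i v₁ = wb then bc.2 ⟨i, h'⟩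
        else bc.1 ⟨(σ i).symm wb, fun hc => h' (by rw [← hc, Equiv.apply_symm_apply])⟩ i)
      else bc.1 ⟨v, h⟩, by
    funext i
    by_cases h' : σ i v₁ = wb
    · have hv : (σ i).symm wb = v₁ := by rw [← h', Equiv.symm_apply_apply]
      simp [h', hv]
    · have hv : ¬(σ i).symm wb = v₁ := fun hc => h' (by rw [← hc, Equiv.apply_symm_apply])
      simp [h', hv]⟩
  left_inv := by
    rintro ⟨a, ha⟩
    apply Subtype.ext
    funext v i
    dsimp only
    by_cases h : v = v₁
    · subst h
      by_cases h' : σ i v = wb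
      · simp [h']
      · simp only [dif_pos rfl, dite_eq_ite, if_true, dif_neg h', if_neg h']
        exact (congrFun ha i).symm
    · simp [h]
  right_inv := by
    rintro ⟨b, c⟩
    refine Prod.ext ?_ ?_
    · funext v i
      simp [v.2]
    · funext i
      simp [i.2]

open Classical MvPolynomial in
lemma key_step {D N : ℕ} {V W : Type*} [Fintype V] [Fintype W]
    (σ : Fin D → V ≃ W) (wb : W) (v₁ : V) :
    (∑ a : V → Fin D → Fin N, if a v₁ = (fun i => a ((σ i).symm wb) i) then
        (∏ v ∈ Finset.univ.erase v₁, (X (Sum.inl (a v)) : TensorRing D N)) *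
          ∏ w ∈ Finset.univ.erase wb, X (Sum.inr fun i => a ((σ i).symm w) i) else 0)
      = (N : TensorRing D N) ^ (Nat.card {i : Fin D // σ i v₁ = wb}) *
          tracePoly (contract σ v₁ wb) := by
  classical
  simp only [tracePoly]
  rw [← Finset.sum_filter]
  rw [Finset.sum_subtype (p := fun a : V → Fin D → Fin N => a v₁ = fun i => a ((σ i).symm wb) i)
      _ (fun a => by simp) (fun a =>
      (∏ v ∈ Finset.univ.erase v₁, (X (Sum.inl (a v)) : TensorRing D N)) *
        ∏ w ∈ Finset.univ.erase wb, X (Sum.inr fun i => a ((σ i).symm w) i))]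
  have hcomp : ∀ a : {a : V → Fin D → Fin N // a v₁ = fun i => a ((σ i).symm wb) i},
      (∏ v ∈ Finset.univ.erase v₁, (X (Sum.inl (a.1 v)) : TensorRing D N)) *
        ∏ w ∈ Finset.univ.erase wb, X (Sum.inr fun i => a.1 ((σ i).symm w) i)
      = (fun bc : (({v : V // v ≠ v₁} → Fin D → Fin N) × ({i : Fin D // σ i v₁ = wb} → Fin N)) =>
          (∏ v : {v : V // v ≠ v₁}, (X (Sum.inl (bc.1 v)) : TensorRing D N)) *
            ∏ w : {w : W // w ≠ wb},
              X (Sum.inr fun i => bc.1 ((contract σ v₁ wb i).symm w) i))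
          (cutEquiv (N := N) σ wb v₁ a) := by
    intro a
    refine congrArg₂ (· * ·) ?_ ?_
    · exact Finset.prod_subtype _ (by simp) _
    · rw [Finset.prod_subtype (p := fun w : W => w ≠ wb) (Finset.univ.erase wb) (by simp)
        (fun w => (X (Sum.inr fun i => a.1 ((σ i).symm w) i) : TensorRing D N))]
      refine Finset.prod_congr rfl fun w _ => ?_
      refine congrArg X (congrArg Sum.inr (funext fun i => ?_))
      change a.1 ((σ i).symm w.1) i = a.1 (((contract σ v₁ wb i).symm w : {v : V // v ≠ v₁}) : V) i
      by_cases h : (σ i).symm w.1 = v₁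
      · have h2 : (((contract σ v₁ wb i).symm w : {v : V // v ≠ v₁}) : V) = (σ i).symm wb := by
          simp [contract, h]
        rw [h2, h]
        exact congrFun a.2 i
      · have h2 : (((contract σ v₁ wb i).symm w : {v : V // v ≠ v₁}) : V) = (σ i).symm w.1 := by
          simp [contract, h]
        rw [h2]
  rw [Fintype.sum_equiv (cutEquiv (N := N) σ wb v₁) _
      (fun bc : (({v : V // v ≠ v₁} → Fin D → Fin N) × ({i : Fin D // σ i v₁ = wb} → Fin N)) =>
        (∏ v : {v : V // v ≠ v₁}, (X (Sum.inl (bc.1 v)) : TensorRing D N)) *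
          ∏ w : {w : W // w ≠ wb},
            X (Sum.inr fun i => bc.1 ((contract σ v₁ wb i).symm w) i)) hcomp]
  rw [Fintype.sum_prod_type]
  simp only [Finset.sum_const, Finset.card_univ, nsmul_eq_mul]
  rw [← Finset.mul_sum]
  refine congrArg₂ (· * ·) ?_ ?_
  · rw [Fintype.card_fun, Fintype.card_fin, Nat.cast_pow, Nat.card_eq_fintype_card]
  · refine (sum_univ_inst _ _ _).trans (Finset.sum_congr rfl fun b _ => ?_)
    exact congrArg₂ (· * ·) (prod_univ_inst _ _ _) (prod_univ_inst _ _ _)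

/-- **Statement 16.** The cutting identity, algebraic core of the Schwinger–Dyson
equations: `Σ_p ∂_{T_p} tr_{σ,w̄₁}(p) = Σ_v N^{d(v,w̄₁)} tr_{σ/(v,w̄₁)}`. -/
theorem cutting_identity {D N : ℕ} (hD : 1 ≤ D) (hN : 1 ≤ N) {V W : Type*}
    [Fintype V] [Fintype W] (σ : Fin D → V ≃ W) (wb : W) :
    ∑ p : Fin D → Fin N, MvPolynomial.pderiv (Sum.inl p) (tracePolyBlack σ wb p)
      = ∑ v : V, (N : TensorRing D N) ^ (Nat.card {i : Fin D // σ i v = wb}) *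
          tracePoly (contract σ v wb) := by
  classical
  have hV : Fintype.ofFinite V = ‹Fintype V› := Subsingleton.elim _ _
  have hW : Fintype.ofFinite W = ‹Fintype W› := Subsingleton.elim _ _
  simp only [tracePolyBlack]
  rw [hV, hW]
  have step1 : ∀ (p : Fin D → Fin N) (a : V → Fin D → Fin N),
      ((∏ v : V, MvPolynomial.X (Sum.inl (a v))) *
        ∏ w : W, if w = wb then
            ∏ i : Fin D, (if a ((σ i).symm w) i = p i then (1 : TensorRing D N) else 0)
          else MvPolynomial.X (Sum.inr fun i => a ((σ i).symm w) i))
      = if (fun i => a ((σ i).symm wb) i) = p then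
          (∏ v : V, MvPolynomial.X (Sum.inl (a v))) *
            ∏ w ∈ Finset.univ.erase wb, MvPolynomial.X (Sum.inr fun i => a ((σ i).symm w) i)
        else 0 := by
    intro p a
    rw [← Finset.mul_prod_erase Finset.univ _ (Finset.mem_univ wb), if_pos rfl,
      show (∏ w ∈ Finset.univ.erase wb,
          if w = wb then ∏ i : Fin D, (if a ((σ i).symm w) i = p i then (1 : TensorRing D N) else 0)
          else MvPolynomial.X (Sum.inr fun i => a ((σ i).symm w) i))
        = ∏ w ∈ Finset.univ.erase wb, MvPolynomial.X (Sum.inr fun i => a ((σ i).symm w) i) from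
        Finset.prod_congr rfl fun w hw => if_neg (Finset.mem_erase.1 hw).1,
      Fintype.prod_boole]
    by_cases h : ∀ i, a ((σ i).symm wb) i = p i
    · rw [if_pos h, one_mul, if_pos (funext h)]
    · rw [if_neg h, zero_mul, mul_zero, if_neg (fun hc => h (fun i => congrFun hc i))]
  have step2 : ∀ (p : Fin D → Fin N) (a : V → Fin D → Fin N),
      MvPolynomial.pderiv (Sum.inl p) (if (fun i => a ((σ i).symm wb) i) = p then
          (∏ v : V, MvPolynomial.X (Sum.inl (a v))) *
            ∏ w ∈ Finset.univ.erase wb,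
              (MvPolynomial.X (Sum.inr fun i => a ((σ i).symm w) i) : TensorRing D N)
        else 0)
      = if (fun i => a ((σ i).symm wb) i) = p then
          MvPolynomial.pderiv (Sum.inl p) ((∏ v : V, MvPolynomial.X (Sum.inl (a v))) *
            ∏ w ∈ Finset.univ.erase wb, MvPolynomial.X (Sum.inr fun i => a ((σ i).symm w) i))
        else 0 := fun p a => by split_ifs <;> simp
  have step3 : ∀ a : V → Fin D → Fin N,
      MvPolynomial.pderiv (Sum.inl (fun i => a ((σ i).symm wb) i))
        ((∏ v : V, MvPolynomial.X (Sum.inl (a v))) *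
          ∏ w ∈ Finset.univ.erase wb,
            (MvPolynomial.X (Sum.inr fun i => a ((σ i).symm w) i) : TensorRing D N))
      = ∑ v₁ : V, if a v₁ = (fun i => a ((σ i).symm wb) i) then
          (∏ v ∈ Finset.univ.erase v₁, MvPolynomial.X (Sum.inl (a v))) *
            ∏ w ∈ Finset.univ.erase wb, MvPolynomial.X (Sum.inr fun i => a ((σ i).symm w) i)
        else 0 := by
    intro a
    have hB0 : MvPolynomial.pderiv (Sum.inl (fun i => a ((σ i).symm wb) i))
        (∏ w ∈ Finset.univ.erase wb,
          (MvPolynomial.X (Sum.inr fun i => a ((σ i).symm w) i) : TensorRing D N)) = 0 := by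
      rw [pderiv_finset_prod]
      exact Finset.sum_eq_zero fun w _ => by
        rw [MvPolynomial.pderiv_X_of_ne Sum.inr_ne_inl, zero_mul]
    rw [Derivation.leibniz, hB0, smul_zero, zero_add, smul_eq_mul, pderiv_finset_prod,
      Finset.mul_sum]
    refine Finset.sum_congr rfl fun v₁ _ => ?_
    rw [MvPolynomial.pderiv_X, Pi.single_apply]
    by_cases h : a v₁ = fun i => a ((σ i).symm wb) i
    · rw [if_pos (congrArg Sum.inl h), if_pos h]; ring
    · rw [if_neg (fun hc => h (Sum.inl.inj hc)), if_neg h]; ring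
  simp only [step1, map_sum, step2]
  rw [Finset.sum_comm]
  simp only [Finset.sum_ite_eq, Finset.mem_univ, if_true]
  simp only [step3]
  rw [Finset.sum_comm]
  exact Finset.sum_congr rfl fun v₁ _ => key_step σ wb v₁
end

section
/- Bound on the number of components of a contraction: let (V, W, σ) be a connected closed D-colored graph with |V| = |W| ≥ 2, let v₁ : V be a white vertex and w₁ : W a black vertex. Then the contracted graph σ/(v₁,w₁) has at most D connected components (its vertex set being partitioned into the orbits of the subgroup generated by { (σ' i).trans (σ' j).symm : i, j : Fin D }, where σ' denotes the contracted family of bijections). -/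
open scoped BigOperators

variable {D N : ℕ}

section ContractAux

variable {D : ℕ} {V W : Type*} (σ : Fin D → V ≃ W) (v₁ : V) (w₁ : W)

lemma contract_apply_ne {i : Fin D} {v : {v : V // v ≠ v₁}} (h : σ i v.1 ≠ w₁) :
    (contract σ v₁ w₁ i v).1 = σ i v.1 := by
  simp [contract, h]

lemma contract_apply_eq {i : Fin D} {v : {v : V // v ≠ v₁}} (h : σ i v.1 = w₁) :
    (contract σ v₁ w₁ i v).1 = σ i v₁ := by
  simp [contract, h]

lemma contract_symm_apply_ne {i : Fin D} {w : {w : W // w ≠ w₁}} (h : (σ i).symm w.1 ≠ v₁) :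
    ((contract σ v₁ w₁ i).symm w).1 = (σ i).symm w.1 := by
  simp only [contract, Equiv.coe_fn_symm_mk]
  rw [dif_neg h]

lemma gen_rel (i j : Fin D) (x : V) :
    (reachSetoid σ).r x ((σ j).symm (σ i x)) :=
  ⟨(σ i).trans (σ j).symm, Subgroup.subset_closure ⟨i, j, rfl⟩, rfl⟩

/-- The set of white vertices that are either `v₁` or connect, in the contracted graph,
to a vertex of the form `(σ k).symm w₁`. -/
def goodSet : Set V :=
  {v | v = v₁ ∨ ∃ (h : v ≠ v₁) (k : Fin D) (hk : (σ k).symm w₁ ≠ v₁),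
      (reachSetoid (contract σ v₁ w₁)).r ⟨v, h⟩ ⟨(σ k).symm w₁, hk⟩}

lemma goodSet_step_base (i j : Fin D) : (σ j).symm (σ i v₁) ∈ goodSet σ v₁ w₁ := by
  by_cases hv' : (σ j).symm (σ i v₁) = v₁
  · exact Or.inl hv'
  by_cases h1 : σ i v₁ = w₁
  · have hj : (σ j).symm w₁ ≠ v₁ := by rw [← h1]; exact hv'
    refine Or.inr ⟨hv', j, hj, ?_⟩
    have hx : (⟨(σ j).symm (σ i v₁), hv'⟩ : {x : V // x ≠ v₁}) = ⟨(σ j).symm w₁, hj⟩ :=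
      Subtype.ext (congrArg (σ j).symm h1)
    rw [hx]
  · have hi : (σ i).symm w₁ ≠ v₁ := fun hc => h1 (by rw [← hc, Equiv.apply_symm_apply])
    have e1 : (contract σ v₁ w₁ i ⟨(σ i).symm w₁, hi⟩).1 = σ i v₁ :=
      contract_apply_eq σ v₁ w₁ (by simp)
    have e2 : ((contract σ v₁ w₁ j).symm (contract σ v₁ w₁ i ⟨(σ i).symm w₁, hi⟩)).1
        = (σ j).symm (σ i v₁) := by
      rw [contract_symm_apply_ne σ v₁ w₁ (by rw [e1]; exact hv'), e1]
    have hgen := gen_rel (contract σ v₁ w₁) i j ⟨(σ i).symm w₁, hi⟩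
    rw [show ((contract σ v₁ w₁ j).symm ((contract σ v₁ w₁ i) ⟨(σ i).symm w₁, hi⟩))
        = ⟨(σ j).symm (σ i v₁), hv'⟩ from Subtype.ext e2] at hgen
    exact Or.inr ⟨hv', i, hi, (reachSetoid (contract σ v₁ w₁)).iseqv.symm hgen⟩

lemma goodSet_step (i j : Fin D) (v : V) (hv : v ∈ goodSet σ v₁ w₁) :
    (σ j).symm (σ i v) ∈ goodSet σ v₁ w₁ := by
  rcases hv with hv1 | ⟨hne, k, hk, hrel⟩
  · rw [hv1]; exact goodSet_step_base σ v₁ w₁ i j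
  by_cases hv' : (σ j).symm (σ i v) = v₁
  · exact Or.inl hv'
  by_cases h1 : σ i v = w₁
  · have hj : (σ j).symm w₁ ≠ v₁ := by rw [← h1]; exact hv'
    refine Or.inr ⟨hv', j, hj, ?_⟩
    have hx : (⟨(σ j).symm (σ i v), hv'⟩ : {x : V // x ≠ v₁}) = ⟨(σ j).symm w₁, hj⟩ :=
      Subtype.ext (congrArg (σ j).symm h1)
    rw [hx]
  · have e1 : (contract σ v₁ w₁ i ⟨v, hne⟩).1 = σ i v := contract_apply_ne σ v₁ w₁ h1
    have e2 : ((contract σ v₁ w₁ j).symm (contract σ v₁ w₁ i ⟨v, hne⟩)).1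
        = (σ j).symm (σ i v) := by
      rw [contract_symm_apply_ne σ v₁ w₁ (by rw [e1]; exact hv'), e1]
    have hgen := gen_rel (contract σ v₁ w₁) i j ⟨v, hne⟩
    rw [show ((contract σ v₁ w₁ j).symm ((contract σ v₁ w₁ i) ⟨v, hne⟩))
        = ⟨(σ j).symm (σ i v), hv'⟩ from Subtype.ext e2] at hgen
    exact Or.inr ⟨hv', k, hk, (reachSetoid (contract σ v₁ w₁)).iseqv.trans
      ((reachSetoid (contract σ v₁ w₁)).iseqv.symm hgen) hrel⟩

lemma goodSet_invariant (g : Equiv.Perm V) (hg : g ∈ bubbleGroup σ) :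
    ∀ v : V, v ∈ goodSet σ v₁ w₁ ↔ g v ∈ goodSet σ v₁ w₁ := by
  refine Subgroup.closure_induction
    (p := fun g _ => ∀ v, v ∈ goodSet σ v₁ w₁ ↔ g v ∈ goodSet σ v₁ w₁) ?_ ?_ ?_ ?_ hg
  · rintro x ⟨i, j, rfl⟩ v
    constructor
    · intro hv
      exact goodSet_step σ v₁ w₁ i j v hv
    · intro hv
      have := goodSet_step σ v₁ w₁ j i _ hv
      simpa using this
  · intro v; simp
  · intro x y hx hy ihx ihy v
    simp only [Equiv.Perm.mul_apply]
    exact (ihy v).trans (ihx (y v))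
  · intro x hx ih v
    simpa using (ih (x⁻¹ v)).symm

end ContractAux

/-- **Statement 18.** The contraction of a connected closed `D`-colored graph with at least
two white vertices has at most `D` connected components. -/
theorem contract_components_bound {D : ℕ} (hD : 1 ≤ D) {V W : Type*}
    [Fintype V] [Fintype W] (σ : Fin D → V ≃ W)
    (hconn : IsConnectedGraph σ) (hV : 2 ≤ Fintype.card V)
    (hVW : Fintype.card V = Fintype.card W)
    (v₁ : V) (w₁ : W) :
    Nat.card (Quotient (reachSetoid (contract σ v₁ w₁))) ≤ D := by
  classical
  have hA : ∀ v : V, v ∈ goodSet σ v₁ w₁ := by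
    intro v
    obtain ⟨g, hg, hgv⟩ := hconn v₁ v
    exact hgv ▸ ((goodSet_invariant σ v₁ w₁ g hg v₁).mp (Or.inl rfl))
  obtain ⟨v₂, hv₂⟩ := Fintype.exists_ne_of_one_lt_card (by omega) v₁
  have hsurj : Function.Surjective (fun i : Fin D =>
      (Quotient.mk (reachSetoid (contract σ v₁ w₁))
        (if h : (σ i).symm w₁ ≠ v₁ then ⟨(σ i).symm w₁, h⟩ else ⟨v₂, hv₂⟩))) := by
    intro q
    induction q using Quotient.inductionOn with
    | h x =>
      obtain ⟨v, hv⟩ := x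
      rcases hA v with hv1 | ⟨hne, k, hk, hrel⟩
      · exact absurd hv1 hv
      refine ⟨k, ?_⟩
      simp only [dif_pos hk]
      exact Quotient.sound ((reachSetoid (contract σ v₁ w₁)).iseqv.symm hrel)
  calc Nat.card (Quotient (reachSetoid (contract σ v₁ w₁)))
      ≤ Nat.card (Fin D) := Nat.card_le_card_of_surjective _ hsurj
    _ = D := by simp
end
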